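/- arXiv:2307.12892 — 3 statements merged into one kernel-verified Lean document; each statement's English description precedes it below -/
import Mathlib

section
/- Let X ∈ R^p be a mean-zero square-integrable random vector with covariance Σ, let U ⊂ [p], and let i ∉ U. Define the residual covariance Σ_{R(U)} = Σ − Σ_{•U} Σ_U⁺ Σ_{U•} and β = (Σ_{R(U)})_{•i}. Then Σ_{R(U∪{i})} = Σ_{R(U)} − (ββᵀ/β_i)·1{β_i > 0}, where Σ_{R(U∪{i})} = Σ − Σ_{•,U∪{i}} Σ_{U∪{i}}⁺ Σ_{U∪{i},•} and 1{·} is the indicator. -/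
open MeasureTheory Matrix

/-- Moore–Penrose pseudoinverse of a real matrix, characterized by the four
Penrose equations (which have a unique solution over ℝ). -/
noncomputable def mpinv {m n : Type*} [Fintype m] [Fintype n] (A : Matrix m n ℝ) :
    Matrix n m ℝ := by
  classical
  exact if h : ∃ B : Matrix n m ℝ,
      A * B * A = A ∧ B * A * B = B ∧ (A * B)ᵀ = A * B ∧ (B * A)ᵀ = B * A
    then h.choose else 0

/-- The matrix of cross second moments `E[Y Xᵀ]`. -/
noncomputable def crossMoment {Ω : Type*} [MeasurableSpace Ω] (μ : Measure Ω)
    {α β : Type*} (Y : Ω → α → ℝ) (X : Ω → β → ℝ) : Matrix α β ℝ :=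
  Matrix.of fun i j => ∫ ω, Y ω i * X ω j ∂μ

section MPAux

variable {l m n k : Type*} [Fintype l] [Fintype m] [Fintype n] [Fintype k]

set_option linter.unusedSectionVars false

/-- Cancellation: `AᵀA X = AᵀA Y → A X = A Y` over `ℝ`. -/
lemma mp_cancel {A : Matrix m n ℝ} {X Y : Matrix n k ℝ}
    (h : Aᵀ * A * X = Aᵀ * A * Y) : A * X = A * Y := by
  have hT : Aᴴ = Aᵀ := conjTranspose_eq_transpose_of_trivial A
  have h0 : Aᵀ * A * (X - Y) = 0 := by rw [Matrix.mul_sub, h, sub_self]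
  have key : (A * (X - Y))ᴴ * (A * (X - Y)) = 0 := by
    calc (A * (X - Y))ᴴ * (A * (X - Y)) = (X - Y)ᴴ * (Aᵀ * A * (X - Y)) := by
          rw [conjTranspose_mul, hT, Matrix.mul_assoc, ← Matrix.mul_assoc Aᵀ A]
      _ = 0 := by rw [h0, Matrix.mul_zero]
  have h2 : A * (X - Y) = 0 := conjTranspose_mul_self_eq_zero.mp key
  rw [Matrix.mul_sub, sub_eq_zero] at h2
  exact h2

/-- Uniqueness of the Moore–Penrose inverse. -/
lemma mp_unique {A : Matrix m n ℝ} {B C : Matrix n m ℝ}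
    (hB1 : A * B * A = A) (hB2 : B * A * B = B) (hB3 : (A * B)ᵀ = A * B)
    (hB4 : (B * A)ᵀ = B * A)
    (hC1 : A * C * A = A) (hC2 : C * A * C = C) (hC3 : (A * C)ᵀ = A * C)
    (hC4 : (C * A)ᵀ = C * A) : B = C := by
  have hACAB : (A * C) * (A * B) = A * B := by
    simp only [← Matrix.mul_assoc]; rw [hC1]
  have hBACA : (B * A) * (C * A) = B * A := by
    rw [Matrix.mul_assoc B A _, ← Matrix.mul_assoc A C A, hC1]
  have hAB : A * B = A * C := by
    calc A * B = ((A * C) * (A * B))ᵀ := by rw [hACAB, hB3]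
      _ = (A * B)ᵀ * (A * C)ᵀ := by rw [transpose_mul]
      _ = (A * B) * (A * C) := by rw [hB3, hC3]
      _ = A * C := by simp only [← Matrix.mul_assoc]; rw [hB1]
  have hBA : B * A = C * A := by
    calc B * A = ((B * A) * (C * A))ᵀ := by rw [hBACA, hB4]
      _ = (C * A)ᵀ * (B * A)ᵀ := by rw [transpose_mul]
      _ = (C * A) * (B * A) := by rw [hB4, hC4]
      _ = C * A := by rw [Matrix.mul_assoc C A _, ← Matrix.mul_assoc A B A, hB1]
  calc B = B * A * B := hB2.symm
    _ = B * (A * C) := by rw [Matrix.mul_assoc, hAB]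
    _ = (C * A) * C := by rw [← Matrix.mul_assoc, hBA]
    _ = C := hC2

/-- Existence of the Moore–Penrose inverse for real symmetric matrices. -/
lemma mp_exists [DecidableEq n] {A : Matrix n n ℝ}
    (hA : A.IsHermitian) : ∃ B : Matrix n n ℝ,
      A * B * A = A ∧ B * A * B = B ∧ (A * B)ᵀ = A * B ∧ (B * A)ᵀ = B * A := by
  classical
  set U : Matrix n n ℝ := (Matrix.IsHermitian.eigenvectorUnitary hA : Matrix n n ℝ) with hU
  have hsU : star U * U = 1 :=
    Matrix.mem_unitaryGroup_iff'.mp (Matrix.IsHermitian.eigenvectorUnitary hA).2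
  have hstar : star U = Uᵀ := by
    rw [Matrix.star_eq_conjTranspose, conjTranspose_eq_transpose_of_trivial]
  set f : n → ℝ := RCLike.ofReal ∘ hA.eigenvalues with hf
  have hAeq : A = U * diagonal f * star U := hA.spectral_theorem
  set g : n → ℝ := fun j => if f j = 0 then 0 else (f j)⁻¹ with hg
  have key : ∀ a b : n → ℝ,
      (U * diagonal a * star U) * (U * diagonal b * star U)
        = U * diagonal (a * b) * star U := by
    intro a b
    rw [Matrix.mul_assoc (U * diagonal a), ← Matrix.mul_assoc (star U),
      ← Matrix.mul_assoc (star U) U (diagonal b), hsU,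
      Matrix.one_mul, ← Matrix.mul_assoc, Matrix.mul_assoc U (diagonal a),
      diagonal_mul_diagonal]
    rfl
  have keyT : ∀ a : n → ℝ, (U * diagonal a * star U)ᵀ = U * diagonal a * star U := by
    intro a
    rw [hstar, transpose_mul, transpose_mul, transpose_transpose, diagonal_transpose,
      Matrix.mul_assoc]
  have hfgf : f * g * f = f := by
    funext j; by_cases h : f j = 0 <;> simp [hg, Pi.mul_apply, h]
  have hgfg : g * f * g = g := by
    funext j; by_cases h : f j = 0 <;> simp [hg, Pi.mul_apply, h]
  refine ⟨U * diagonal g * star U, ?_, ?_, ?_, ?_⟩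
  · rw [hAeq, key, key, hfgf]
  · rw [hAeq, key, key, hgfg]
  · rw [hAeq, key, keyT]
  · rw [hAeq, key, keyT]

/-- The Penrose equations hold for `mpinv` of a real symmetric matrix. -/
lemma mpinv_penrose [DecidableEq n] {A : Matrix n n ℝ} (hA : A.IsHermitian) :
    A * mpinv A * A = A ∧ mpinv A * A * mpinv A = mpinv A ∧
      (A * mpinv A)ᵀ = A * mpinv A ∧ (mpinv A * A)ᵀ = mpinv A * A := by
  have h := mp_exists hA
  rw [mpinv, dif_pos h]
  exact h.choose_spec

/-- `mpinv` of a real symmetric matrix is symmetric. -/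
lemma mpinv_symm [DecidableEq n] {A : Matrix n n ℝ} (hA : A.IsHermitian) :
    (mpinv A)ᵀ = mpinv A := by
  have hAT : Aᵀ = A := by
    rw [← conjTranspose_eq_transpose_of_trivial]; exact hA
  obtain ⟨e1, e2, e3, e4⟩ := mpinv_penrose hA
  set M := mpinv A with hM
  have c1 : A * Mᵀ * A = A := by
    have := congrArg transpose e1
    simp only [transpose_mul, hAT] at this
    rw [← Matrix.mul_assoc] at this
    exact this
  have c2 : Mᵀ * A * Mᵀ = Mᵀ := by
    have := congrArg transpose e2
    simp only [transpose_mul, hAT] at this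
    rw [← Matrix.mul_assoc] at this
    exact this
  have hAMT : A * Mᵀ = M * A := by
    calc A * Mᵀ = Aᵀ * Mᵀ := by rw [hAT]
      _ = (M * A)ᵀ := (transpose_mul M A).symm
      _ = M * A := e4
  have hMTA : Mᵀ * A = A * M := by
    calc Mᵀ * A = Mᵀ * Aᵀ := by rw [hAT]
      _ = (A * M)ᵀ := (transpose_mul A M).symm
      _ = A * M := e3
  have c3 : (A * Mᵀ)ᵀ = A * Mᵀ := by rw [hAMT]; exact e4
  have c4 : (Mᵀ * A)ᵀ = Mᵀ * A := by rw [hMTA]; exact e3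
  exact (mp_unique e1 e2 e3 e4 c1 c2 c3 c4).symm

lemma submatrix_mul_id_right (M : Matrix m n ℝ) (N : Matrix n k ℝ) (c : l → k) :
    (M * N).submatrix id c = M * N.submatrix id c := by
  ext a b; simp [Matrix.mul_apply]

lemma submatrix_mul_id_left (M : Matrix m n ℝ) (N : Matrix n k ℝ) (r : l → m) :
    (M * N).submatrix r id = M.submatrix r id * N := by
  ext a b; simp [Matrix.mul_apply]

lemma mul_vecMulVec (M : Matrix m n ℝ) (u : n → ℝ) (v : k → ℝ) :
    M * vecMulVec u v = vecMulVec (M *ᵥ u) v := by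
  ext a b
  simp [Matrix.mul_apply, vecMulVec_apply, mulVec, dotProduct, Finset.sum_mul, mul_assoc]

lemma vecMulVec_mul (M : Matrix n k ℝ) (u : m → ℝ) (v : n → ℝ) :
    vecMulVec u v * M = vecMulVec u (Mᵀ *ᵥ v) := by
  ext a b
  simp only [Matrix.mul_apply, vecMulVec_apply, mulVec, dotProduct, transpose_apply]
  rw [Finset.mul_sum]
  exact Finset.sum_congr rfl fun s _ => by ring

lemma vecMulVec_mul_vecMulVec (u : m → ℝ) (v w : n → ℝ) (z : k → ℝ) :
    vecMulVec u v * vecMulVec w z = (v ⬝ᵥ w) • vecMulVec u z := by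
  ext a b
  simp only [Matrix.mul_apply, vecMulVec_apply, Matrix.smul_apply, dotProduct, smul_eq_mul,
    Finset.sum_mul]
  exact Finset.sum_congr rfl fun s _ => by ring


lemma mulVec_dot_symm {M : Matrix m m ℝ} (hM : Mᵀ = M) (x y : m → ℝ) :
    (M *ᵥ x) ⬝ᵥ y = x ⬝ᵥ (M *ᵥ y) := by
  simp only [dotProduct, mulVec, Finset.sum_mul, Finset.mul_sum]
  rw [Finset.sum_comm]
  refine Finset.sum_congr rfl fun a _ => Finset.sum_congr rfl fun b _ => ?_
  have : M b a = M a b := by rw [show M b a = Mᵀ a b from rfl, hM]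
  rw [this]; ring

/-- The projection `A (AᵀA)⁺ Aᵀ` is a symmetric idempotent fixing `A`. -/
lemma proj_props [DecidableEq n] (A : Matrix m n ℝ) :
    (A * mpinv (Aᵀ * A) * Aᵀ)ᵀ = A * mpinv (Aᵀ * A) * Aᵀ ∧
    (A * mpinv (Aᵀ * A) * Aᵀ) * (A * mpinv (Aᵀ * A) * Aᵀ) = A * mpinv (Aᵀ * A) * Aᵀ ∧
    (A * mpinv (Aᵀ * A) * Aᵀ) * A = A := by
  have hH : (Aᵀ * A).IsHermitian := by
    rw [Matrix.IsHermitian, conjTranspose_eq_transpose_of_trivial, transpose_mul,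
      transpose_transpose]
  obtain ⟨e1, e2, e3, e4⟩ := mpinv_penrose hH
  have hMsym : (mpinv (Aᵀ * A))ᵀ = mpinv (Aᵀ * A) := mpinv_symm hH
  set M := mpinv (Aᵀ * A) with hM
  refine ⟨?_, ?_, ?_⟩
  · rw [transpose_mul, transpose_mul, transpose_transpose, hMsym, Matrix.mul_assoc]
  · calc (A * M * Aᵀ) * (A * M * Aᵀ) = A * (M * (Aᵀ * A) * M) * Aᵀ := by
          simp only [Matrix.mul_assoc]
      _ = A * M * Aᵀ := by rw [e2]
  · have hc : Aᵀ * A * (M * (Aᵀ * A)) = Aᵀ * A * 1 := by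
      rw [Matrix.mul_one, ← Matrix.mul_assoc, e1]
    have := mp_cancel hc
    rw [Matrix.mul_one] at this
    calc (A * M * Aᵀ) * A = A * (M * (Aᵀ * A)) := by simp only [Matrix.mul_assoc]
      _ = A := this

/-- Uniqueness of the orthogonal projection onto the column span of `A`. -/
lemma proj_unique {A : Matrix m n ℝ} {P P' : Matrix m m ℝ}
    (hP : Pᵀ = P) (hP' : P'ᵀ = P') (hPA : P * A = A) (hP'A : P' * A = A)
    (hC : ∃ C : Matrix n m ℝ, P = A * C) (hC' : ∃ C' : Matrix n m ℝ, P' = A * C') : P = P' := by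
  have h1 : P' * P = P := by
    obtain ⟨C, hCe⟩ := hC
    rw [hCe, ← Matrix.mul_assoc, hP'A]
  have h2 : P * P' = P' := by
    obtain ⟨C', hCe⟩ := hC'
    rw [hCe, ← Matrix.mul_assoc, hPA]
  calc P = Pᵀ := hP.symm
    _ = (P' * P)ᵀ := by rw [h1]
    _ = Pᵀ * P'ᵀ := by rw [transpose_mul]
    _ = P * P' := by rw [hP, hP']
    _ = P' := h2

end MPAux

open scoped MatrixOrder in
lemma exists_sqrt_aux {n : Type*} [Fintype n] [DecidableEq n] {S : Matrix n n ℝ}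
    (hS : S.PosSemidef) : ∃ A : Matrix n n ℝ, A * A = S ∧ Aᵀ = A := by
  refine ⟨CFC.sqrt S, CFC.sqrt_mul_sqrt_self S hS.nonneg, ?_⟩
  rw [← conjTranspose_eq_transpose_of_trivial]; exact (CFC.sqrt_nonneg S).posSemidef.1

/-- **Efficient residual covariance update** (Lemma 1). -/
theorem residual_cov_update {Ω : Type*} [MeasurableSpace Ω] (μ : Measure Ω)
    [IsProbabilityMeasure μ] {p : ℕ}
    (X : Ω → Fin p → ℝ) (hX : ∀ i, MemLp (fun ω => X ω i) 2 μ)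
    (hmean : ∀ i, ∫ ω, X ω i ∂μ = 0)
    (Sig : Matrix (Fin p) (Fin p) ℝ) (hSig : Sig = crossMoment μ X X)
    (U : Finset (Fin p)) (i : Fin p) (hi : i ∉ U)
    (resid : Finset (Fin p) → Matrix (Fin p) (Fin p) ℝ)
    (hresid : ∀ V : Finset (Fin p),
      resid V = Sig - Sig.submatrix id (fun j : ↥V => (j : Fin p)) *
        mpinv (Sig.submatrix (fun j : ↥V => (j : Fin p)) (fun j : ↥V => (j : Fin p))) *
        Sig.submatrix (fun j : ↥V => (j : Fin p)) id)
    (β : Fin p → ℝ) (hβ : β = fun j => resid U j i) :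
    resid (insert i U) =
      resid U - Matrix.of fun j l => if 0 < β i then β j * β l / β i else 0 := by
  classical
  -- integrability of products
  have hmul : ∀ j l, Integrable (fun ω => X ω j * X ω l) μ := by
    intro j l
    have h1 : Integrable (fun ω => (X ω j + X ω l) ^ 2) μ := ((hX j).add (hX l)).integrable_sq
    have h2 := (hX j).integrable_sq
    have h3 := (hX l).integrable_sq
    have h4 := (((h1.sub h2).sub h3).const_mul (1 / 2 : ℝ))
    refine h4.congr (Filter.Eventually.of_forall fun ω => ?_)
    simp only [Pi.sub_apply]
    ring
  -- Sig is positive semidefinite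
  have hHerm : Sig.IsHermitian := by
    rw [Matrix.IsHermitian]
    ext j l
    simp only [conjTranspose_apply, hSig, crossMoment, Matrix.of_apply, star_trivial]
    exact integral_congr_ae (Filter.Eventually.of_forall fun ω => mul_comm _ _)
  have hPSD : Sig.PosSemidef := by
    refine Matrix.PosSemidef.of_dotProduct_mulVec_nonneg hHerm fun x => ?_
    have hsx : star x = x := by
      funext j; exact star_trivial _
    rw [hsx]
    have hterm : ∀ j l : Fin p, x j * (Sig j l * x l)
        = ∫ ω, (x j * X ω j) * (x l * X ω l) ∂μ := by
      intro j l
      have : ∀ ω, (x j * X ω j) * (x l * X ω l) = (x j * x l) * (X ω j * X ω l) :=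
        fun ω => by ring
      simp only [this]
      rw [integral_const_mul, hSig]
      simp only [crossMoment, Matrix.of_apply]
      ring
    have hint : ∀ j : Fin p, Integrable (fun ω => ∑ l, (x j * X ω j) * (x l * X ω l)) μ := by
      intro j
      apply integrable_finset_sum
      intro l _
      have : (fun ω => (x j * X ω j) * (x l * X ω l))
          = fun ω => (x j * x l) * (X ω j * X ω l) := funext fun ω => by ring
      rw [this]
      exact (hmul j l).const_mul _
    calc (0 : ℝ) ≤ ∫ ω, (∑ j, x j * X ω j) ^ 2 ∂μ :=
          integral_nonneg fun ω => sq_nonneg _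
      _ = ∫ ω, ∑ j, ∑ l, (x j * X ω j) * (x l * X ω l) ∂μ := by
          congr 1; funext ω; rw [sq, Finset.sum_mul_sum]
      _ = ∑ j, ∫ ω, ∑ l, (x j * X ω j) * (x l * X ω l) ∂μ := by
          rw [integral_finset_sum _ fun j _ => hint j]
      _ = ∑ j, ∑ l, ∫ ω, (x j * X ω j) * (x l * X ω l) ∂μ := by
          refine Finset.sum_congr rfl fun j _ => ?_
          refine integral_finset_sum _ fun l _ => ?_
          have : (fun ω => (x j * X ω j) * (x l * X ω l))
              = fun ω => (x j * x l) * (X ω j * X ω l) := funext fun ω => by ring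
          rw [this]
          exact (hmul j l).const_mul _
      _ = ∑ j, ∑ l, x j * (Sig j l * x l) := by
          refine Finset.sum_congr rfl fun j _ => Finset.sum_congr rfl fun l _ => ?_
          rw [hterm]
      _ = x ⬝ᵥ (Sig *ᵥ x) := by
          simp only [dotProduct, mulVec, Finset.mul_sum]
  -- the square root of Sig
  obtain ⟨A, hAA, hAT⟩ := exists_sqrt_aux hPSD
  -- index inclusion matrices
  set V' : Finset (Fin p) := insert i U with hV'
  set cU : ↥U → Fin p := fun j => (j : Fin p) with hcU
  set cV : ↥V' → Fin p := fun j => (j : Fin p) with hcV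
  set AU : Matrix (Fin p) ↥U ℝ := A.submatrix id cU with hAU
  set AV : Matrix (Fin p) ↥V' ℝ := A.submatrix id cV with hAV
  have hAUT : AUᵀ = A.submatrix cU id := by rw [hAU, transpose_submatrix, hAT]
  have hAVT : AVᵀ = A.submatrix cV id := by rw [hAV, transpose_submatrix, hAT]
  have hsub2 : ∀ {q : Type} [Fintype q] (c : q → Fin p), Sig.submatrix c c
      = (A.submatrix id c)ᵀ * A.submatrix id c := by
    intro q _ c
    rw [transpose_submatrix, hAT, ← hAA]
    have h0 : (A * A).submatrix c c = ((A * A).submatrix c id).submatrix id c := by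
      rw [submatrix_submatrix]; rfl
    rw [h0, submatrix_mul_id_left, submatrix_mul_id_right]
  have hSigU : Sig.submatrix id cU = A * AU := by rw [← hAA, submatrix_mul_id_right, hAU]
  have hSigU' : Sig.submatrix cU id = AUᵀ * A := by
    rw [← hAA, submatrix_mul_id_left, hAUT]
  have hSigV : Sig.submatrix id cV = A * AV := by rw [← hAA, submatrix_mul_id_right, hAV]
  have hSigV' : Sig.submatrix cV id = AVᵀ * A := by
    rw [← hAA, submatrix_mul_id_left, hAVT]
  have hSigUU : Sig.submatrix cU cU = AUᵀ * AU := by rw [hsub2 cU, hAU]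
  have hSigVV : Sig.submatrix cV cV = AVᵀ * AV := by rw [hsub2 cV, hAV]
  set MU : Matrix ↥U ↥U ℝ := mpinv (AUᵀ * AU) with hMU
  set MV : Matrix ↥V' ↥V' ℝ := mpinv (AVᵀ * AV) with hMV
  set PU : Matrix (Fin p) (Fin p) ℝ := AU * MU * AUᵀ with hPU
  set PV : Matrix (Fin p) (Fin p) ℝ := AV * MV * AVᵀ with hPV
  have hrU : resid U = Sig - A * PU * A := by
    rw [hresid U]
    rw [show (fun j : ↥U => (j : Fin p)) = cU from rfl]
    rw [hSigU, hSigU', hSigUU, ← hMU, hPU]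
    simp only [Matrix.mul_assoc]
  have hrV : resid V' = Sig - A * PV * A := by
    rw [hresid V']
    rw [show (fun j : ↥V' => (j : Fin p)) = cV from rfl]
    rw [hSigV, hSigV', hSigVV, ← hMV, hPV]
    simp only [Matrix.mul_assoc]
  obtain ⟨hPUsym, hPUidem, hPUA⟩ := proj_props AU
  obtain ⟨hPVsym, hPVidem, hPVA⟩ := proj_props AV
  rw [← hMU, ← hPU] at hPUsym hPUidem hPUA
  rw [← hMV, ← hPV] at hPVsym hPVidem hPVA
  -- the residual vector r
  set ai : Fin p → ℝ := fun k => A k i with hai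
  set r : Fin p → ℝ := ai - PU *ᵥ ai with hr
  have hMA : ∀ M : Matrix (Fin p) (Fin p) ℝ, (M *ᵥ ai) = fun j => (M * A) j i := by
    intro M; funext j
    simp [mulVec, dotProduct, Matrix.mul_apply, hai]
  have hβr : β = A *ᵥ r := by
    rw [hβ, hrU, hr]
    funext j
    rw [mulVec_sub, mulVec_mulVec, Pi.sub_apply, hMA A, hMA (A * PU), hAA]
    simp
  have hPUr : PU *ᵥ r = 0 := by
    rw [hr, mulVec_sub, mulVec_mulVec, hPUidem, sub_self]
  have hrr : r ⬝ᵥ r = β i := by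
    have h1 : r ⬝ᵥ r = ai ⬝ᵥ r - (PU *ᵥ ai) ⬝ᵥ r := by
      rw [hr, sub_dotProduct]
    have h2 : (PU *ᵥ ai) ⬝ᵥ r = 0 := by
      rw [mulVec_dot_symm hPUsym, hPUr, dotProduct_zero]
    have h3 : β i = ai ⬝ᵥ r := by
      rw [hβr]
      simp only [mulVec, dotProduct, hai]
      refine Finset.sum_congr rfl fun k _ => ?_
      have : A i k = A k i := by rw [show A i k = Aᵀ k i from rfl, hAT]
      rw [this]
    rw [h1, h2, h3, sub_zero]
  -- columns of A over U are fixed by PU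
  have hfix : ∀ j : ↥U, PU *ᵥ (fun l => A l (j : Fin p)) = fun l => A l (j : Fin p) := by
    intro j; funext l
    have h0 := congrFun (congrFun hPUA l) j
    simpa [Matrix.mul_apply, mulVec, dotProduct, hAU, hcU] using h0
  have hβU : ∀ j : Fin p, j ∈ U → β j = 0 := by
    intro j hj
    have h0 : β j = (fun l => A l j) ⬝ᵥ r := by
      rw [hβr]
      simp only [mulVec, dotProduct]
      refine Finset.sum_congr rfl fun k _ => ?_
      have : A j k = A k j := by rw [show A j k = Aᵀ k j from rfl, hAT]
      rw [this]
    rw [h0, ← hfix ⟨j, hj⟩, mulVec_dot_symm hPUsym, hPUr, dotProduct_zero]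
  -- inclusion matrix J and indicator vector eV
  have hiV : i ∈ V' := Finset.mem_insert_self i U
  set J : Matrix ↥V' ↥U ℝ :=
    Matrix.of (fun k j => if (k : Fin p) = (j : Fin p) then 1 else 0) with hJ
  set eV : ↥V' → ℝ := fun k => if (k : Fin p) = i then 1 else 0 with heV
  have hAUJ : AU = AV * J := by
    ext l j
    rw [Matrix.mul_apply]
    set k0 : ↥V' := ⟨(j : Fin p), Finset.mem_insert_of_mem j.2⟩ with hk0
    have hcond : ∀ k : ↥V', ((k : Fin p) = (j : Fin p)) = (k = k0) := by
      intro k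
      refine propext ⟨fun h => Subtype.ext h, fun h => by rw [h]⟩
    simp only [hJ, Matrix.of_apply, hcond, mul_ite, mul_one, mul_zero,
      Fintype.sum_ite_eq']
    rfl
  have hAVe : AV *ᵥ eV = ai := by
    funext l
    rw [mulVec, dotProduct]
    set k0 : ↥V' := ⟨i, hiV⟩ with hk0
    have hcond : ∀ k : ↥V', ((k : Fin p) = i) = (k = k0) := by
      intro k
      refine propext ⟨fun h => Subtype.ext h, fun h => by rw [h]⟩
    simp only [heV, hcond, mul_ite, mul_one, mul_zero, Fintype.sum_ite_eq']
    rfl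
  have hAVr : AVᵀ *ᵥ r = β i • eV := by
    funext k
    have h0 : (AVᵀ *ᵥ r) k = β (k : Fin p) := by
      rw [hβr]
      simp only [mulVec, dotProduct, transpose_apply, hAV, submatrix_apply, id]
      refine Finset.sum_congr rfl fun s _ => ?_
      have hks : A ((k : Fin p)) s = A s (k : Fin p) := by
        rw [show A ((k : Fin p)) s = Aᵀ s (k : Fin p) from rfl, hAT]
      rw [hks]
    rw [h0, Pi.smul_apply, smul_eq_mul]
    by_cases hk : (k : Fin p) = i
    · simp only [heV]
      rw [hk, if_pos rfl, mul_one]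
    · simp only [heV]
      rw [if_neg hk, mul_zero]
      exact hβU _ ((Finset.mem_insert.mp k.2).resolve_left hk)
  -- range conditions
  have hPUrange : ∃ C : Matrix ↥V' (Fin p) ℝ, PU = AV * C :=
    ⟨J * (MU * AUᵀ), by rw [hPU, hAUJ]; simp only [Matrix.mul_assoc]⟩
  have hPVrange : ∃ C : Matrix ↥V' (Fin p) ℝ, PV = AV * C :=
    ⟨MV * AVᵀ, by rw [hPV]; simp only [Matrix.mul_assoc]⟩
  have hPUAV : PU * AV = AV - vecMulVec r eV := by
    ext l k
    rw [Matrix.sub_apply, Matrix.mul_apply, vecMulVec_apply]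
    have hcol : ∑ s, PU l s * AV s k = (PU *ᵥ (fun t => A t (k : Fin p))) l := by
      simp [mulVec, dotProduct, hAV]
      rfl
    rw [hcol]
    by_cases hk : (k : Fin p) = i
    · have hPa : PU *ᵥ (fun t => A t (k : Fin p)) = ai - r := by
        rw [hk, show (fun t => A t i) = ai from rfl, hr]
        funext t; simp
      rw [hPa]
      simp only [heV]
      rw [if_pos hk, mul_one, Pi.sub_apply]
      have : AV l k = ai l := by
        rw [hAV, hai]
        simp only [submatrix_apply, id, hcV]
        rw [hk]
      rw [this]
    · have hkU : (k : Fin p) ∈ U := (Finset.mem_insert.mp k.2).resolve_left hk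
      rw [show (fun t => A t (k : Fin p))
          = (fun t => A t ((⟨(k : Fin p), hkU⟩ : ↥U) : Fin p)) from rfl, hfix]
      simp only [heV]
      rw [if_neg hk, mul_zero, sub_zero]
      rw [hAV]; rfl
  by_cases hpos : 0 < β i
  · -- nondegenerate case
    have hcne : β i ≠ 0 := ne_of_gt hpos
    set R : Matrix (Fin p) (Fin p) ℝ := vecMulVec r r with hR
    set P' : Matrix (Fin p) (Fin p) ℝ := PU + (β i)⁻¹ • R with hP'
    have hRT : Rᵀ = R := by
      ext a b; simp [hR, vecMulVec_apply, transpose_apply, mul_comm]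
    have hP'sym : P'ᵀ = P' := by rw [hP', transpose_add, transpose_smul, hRT, hPUsym]
    have hPUR : PU * R = 0 := by
      rw [hR, _root_.mul_vecMulVec, hPUr]; ext a b; simp [vecMulVec_apply]
    have hRPU : R * PU = 0 := by
      rw [hR, _root_.vecMulVec_mul, hPUsym, hPUr]; ext a b; simp [vecMulVec_apply]
    have hRR : R * R = β i • R := by
      rw [hR, _root_.vecMulVec_mul_vecMulVec, hrr]
    have hP'idem : P' * P' = P' := by
      rw [hP', Matrix.add_mul, Matrix.mul_add, Matrix.mul_add, hPUidem,
        Matrix.mul_smul, hPUR, Matrix.smul_mul, hRPU, Matrix.smul_mul, Matrix.mul_smul,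
        hRR, smul_smul, smul_smul, mul_assoc, inv_mul_cancel₀ hcne, mul_one]
      simp
    have hRAV : R * AV = β i • vecMulVec r eV := by
      rw [hR, _root_.vecMulVec_mul, hAVr]
      ext a b; simp only [vecMulVec_apply, Matrix.smul_apply, Pi.smul_apply, smul_eq_mul]; ring
    have hP'AV : P' * AV = AV := by
      rw [hP', Matrix.add_mul, hPUAV, Matrix.smul_mul, hRAV, smul_smul,
        inv_mul_cancel₀ hcne, one_smul]
      exact sub_add_cancel _ _
    have hrAV : AV *ᵥ (eV - J *ᵥ (MU *ᵥ (AUᵀ *ᵥ ai))) = r := by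
      rw [mulVec_sub, hAVe, mulVec_mulVec, mulVec_mulVec, mulVec_mulVec, ← hAUJ]
    have hP'range : ∃ C : Matrix ↥V' (Fin p) ℝ, P' = AV * C := by
      refine ⟨J * (MU * AUᵀ) + (β i)⁻¹ • vecMulVec (eV - J *ᵥ (MU *ᵥ (AUᵀ *ᵥ ai))) r, ?_⟩
      rw [Matrix.mul_add, Matrix.mul_smul, _root_.mul_vecMulVec, hrAV, ← hR, hP']
      congr 1
      rw [hPU, hAUJ]; simp only [Matrix.mul_assoc]
    have hPVP' : PV = P' := proj_unique hPVsym hP'sym hPVA hP'AV hPVrange hP'range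
    have hARA : A * R * A = vecMulVec β β := by
      rw [hR, _root_.mul_vecMulVec, _root_.vecMulVec_mul, hAT, ← hβr]
    rw [hrV, hPVP', hP', hrU]
    rw [Matrix.mul_add, Matrix.add_mul, Matrix.mul_smul, Matrix.smul_mul, hARA]
    have hof : (Matrix.of fun j l => if 0 < β i then β j * β l / β i else 0)
        = (β i)⁻¹ • vecMulVec β β := by
      ext a b
      simp only [Matrix.of_apply, if_pos hpos, Matrix.smul_apply, vecMulVec_apply, smul_eq_mul,
        div_eq_inv_mul]
      try ring
    rw [hof, sub_add_eq_sub_sub]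
  · -- degenerate case
    have h0 : β i = 0 := le_antisymm (not_lt.mp hpos) (by
      rw [← hrr]
      have := dotProduct_star_self_nonneg r
      simpa using this)
    have hr0 : r = 0 := by
      have h1 := hrr
      rw [h0] at h1
      exact dotProduct_self_eq_zero.mp h1
    have hPUAV' : PU * AV = AV := by
      rw [hPUAV, hr0]
      ext a b; simp [vecMulVec_apply]
    have hPVPU : PV = PU := proj_unique hPVsym hPUsym hPVA hPUAV' hPVrange hPUrange
    rw [hrV, hPVPU, ← hrU]
    have hof : (Matrix.of fun j l => if 0 < β i then β j * β l / β i else 0)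
        = (0 : Matrix (Fin p) (Fin p) ℝ) := by
      ext a b; simp [hpos]
    rw [hof, sub_zero]
end

section
/- Let X ∈ R^p be a square-integrable random vector following a k-dimensional factor model: X = μ + WZ + ε, where Z ∈ R^k has mean zero and covariance I_k, ε has mean zero and diagonal (possibly singular) covariance D with Cov(Z, ε) = 0, and Cov(X) = Σ ≻ 0. If the common factors are components, i.e., Z = B(X − μ) for some B ∈ R^{k×p}, then there exist a size-k subset S ⊆ [p], a matrix W̃ ∈ R^{(p−k)×k}, and a random vector ε̃ with positive-definite diagonal covariance and Cov(X_S, ε̃) = 0 such that X_{−S} = μ_{−S} + W̃(X_S − μ_S) + ε̃. Conversely, any such subset representation yields a factor model whose common factors are components. -/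
open MeasureTheory Matrix

section Helpers
variable {Ω : Type*} [MeasurableSpace Ω] {μ : Measure Ω} [IsProbabilityMeasure μ]

omit [IsProbabilityMeasure μ] in
lemma my_int_mul {f g : Ω → ℝ} (hf : MemLp f 2 μ) (hg : MemLp g 2 μ) :
    Integrable (fun ω => f ω * g ω) μ := by
  have h : MemLp (f • g) 1 μ := hg.smul hf (hpqr := ⟨by norm_num; exact ENNReal.inv_two_add_inv_two⟩)
  exact memLp_one_iff_integrable.mp h

omit [IsProbabilityMeasure μ] in
lemma my_memLp_sum {ι : Type*} [Fintype ι] (c : ι → ℝ) (h : ι → Ω → ℝ)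
    (hh : ∀ l, MemLp (h l) 2 μ) : MemLp (fun ω => ∑ l, c l * h l ω) 2 μ := by
  have : ∀ l ∈ Finset.univ, MemLp (fun ω => c l * h l ω) 2 μ :=
    fun l _ => (hh l).const_mul _
  have h2 := memLp_finset_sum' Finset.univ this
  have : (∑ i : ι, fun ω => c i * h i ω) = fun ω => ∑ l : ι, c l * h l ω := by
    funext ω; simp
  rwa [this] at h2

omit [IsProbabilityMeasure μ] in
lemma my_integral_mul_sum {ι : Type*} [Fintype ι] {f : Ω → ℝ} (hf : MemLp f 2 μ)
    (c : ι → ℝ) (h : ι → Ω → ℝ) (hh : ∀ l, MemLp (h l) 2 μ) :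
    ∫ ω, f ω * (∑ l, c l * h l ω) ∂μ = ∑ l, c l * ∫ ω, f ω * h l ω ∂μ := by
  have he : ∀ ω, f ω * (∑ l, c l * h l ω) = ∑ l, c l * (f ω * h l ω) := by
    intro ω; rw [Finset.mul_sum]; exact Finset.sum_congr rfl fun l _ => by ring
  simp_rw [he]
  rw [integral_finset_sum]
  · exact Finset.sum_congr rfl fun l _ => integral_const_mul _ _
  · exact fun l _ => (my_int_mul hf (hh l)).const_mul _

omit [IsProbabilityMeasure μ] in
lemma my_integral_mul_add_sum {ι : Type*} [Fintype ι] {f g : Ω → ℝ} (hf : MemLp f 2 μ)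
    (hg : MemLp g 2 μ) (c : ι → ℝ) (h : ι → Ω → ℝ) (hh : ∀ l, MemLp (h l) 2 μ) :
    ∫ ω, f ω * (g ω + ∑ l, c l * h l ω) ∂μ
      = (∫ ω, f ω * g ω ∂μ) + ∑ l, c l * ∫ ω, f ω * h l ω ∂μ := by
  have he : ∀ ω, f ω * (g ω + ∑ l, c l * h l ω)
      = f ω * g ω + f ω * (∑ l, c l * h l ω) := fun ω => by ring
  simp_rw [he]
  rw [integral_add (my_int_mul hf hg)
    (my_int_mul hf (my_memLp_sum c h hh)), my_integral_mul_sum hf c h hh]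

omit [IsProbabilityMeasure μ] in
lemma my_integral_mul_sub_sum {ι : Type*} [Fintype ι] {f g : Ω → ℝ} (hf : MemLp f 2 μ)
    (hg : MemLp g 2 μ) (c : ι → ℝ) (h : ι → Ω → ℝ) (hh : ∀ l, MemLp (h l) 2 μ) :
    ∫ ω, f ω * (g ω - ∑ l, c l * h l ω) ∂μ
      = (∫ ω, f ω * g ω ∂μ) - ∑ l, c l * ∫ ω, f ω * h l ω ∂μ := by
  have he : ∀ ω, f ω * (g ω - ∑ l, c l * h l ω)
      = f ω * g ω - f ω * (∑ l, c l * h l ω) := fun ω => by ring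
  simp_rw [he]
  rw [integral_sub (my_int_mul hf hg)
    (my_int_mul hf (my_memLp_sum c h hh)), my_integral_mul_sum hf c h hh]

lemma my_integral_sum {ι : Type*} [Fintype ι] (c : ι → ℝ) (h : ι → Ω → ℝ)
    (hh : ∀ l, MemLp (h l) 2 μ) :
    ∫ ω, (∑ l, c l * h l ω) ∂μ = ∑ l, c l * ∫ ω, h l ω ∂μ := by
  rw [integral_finset_sum]
  · exact Finset.sum_congr rfl fun l _ => integral_const_mul _ _
  · exact fun l _ => ((hh l).integrable one_le_two).const_mul _

end Helpers

lemma my_posdef_submatrix {n : Type*} [Fintype n] [DecidableEq n] {ι : Type*} [Fintype ι]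
    [DecidableEq ι] {M : Matrix n n ℝ} (hM : M.PosDef) {f : ι → n}
    (hf : Function.Injective f) : (M.submatrix f f).PosDef := by
  refine Matrix.PosDef.of_dotProduct_mulVec_pos ?_ ?_
  · show (M.submatrix f f)ᴴ = M.submatrix f f
    rw [Matrix.conjTranspose_submatrix, hM.1]
  · intro x hx
    set B : Matrix n ι ℝ := (1 : Matrix n n ℝ).submatrix id f with hB
    have hBx : ∀ j : ι, (B *ᵥ x) (f j) = x j := by
      intro j
      simp only [hB, Matrix.mulVec, dotProduct, Matrix.submatrix_apply, id_eq,
        Matrix.one_apply, hf.eq_iff]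
      simp [Finset.sum_ite_eq']
    have hsub : M.submatrix f f = Bᵀ * M * B := by
      ext i j
      simp only [Matrix.mul_apply, Matrix.transpose_apply, hB, Matrix.submatrix_apply, id_eq,
        Matrix.one_apply, hf.eq_iff]
      simp [Finset.sum_ite_eq, Finset.mul_sum]
    have hx' : B *ᵥ x ≠ 0 := by
      intro h0
      apply hx
      funext j
      have := congrFun h0 (f j)
      rw [hBx j] at this
      simpa using this
    have := hM.dotProduct_mulVec_pos hx'
    simp only [star_trivial] at this ⊢
    rw [hsub, ← Matrix.mulVec_mulVec, ← Matrix.mulVec_mulVec,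
      dotProduct_mulVec x Bᵀ, Matrix.vecMul_transpose]
    exact this

lemma my_card_nonzero {n k : ℕ} (B : Matrix (Fin k) (Fin n) ℝ) (Sig : Matrix (Fin n) (Fin n) ℝ)
    (hS : IsUnit Sig.det) (hBSB : B * Sig * Bᵀ = 1) (d : Fin n → ℝ)
    (hd : Matrix.diagonal d = (1 - Sig * Bᵀ * B) * Sig) :
    Fintype.card {i // d i ≠ 0} + k ≤ n := by
  set P : Matrix (Fin n) (Fin n) ℝ := Sig * Bᵀ * B with hP
  have hPP : P * P = P := by
    show Sig * Bᵀ * B * (Sig * Bᵀ * B) = Sig * Bᵀ * B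
    calc Sig * Bᵀ * B * (Sig * Bᵀ * B) = Sig * Bᵀ * (B * Sig * Bᵀ) * B := by
          simp only [Matrix.mul_assoc]
      _ = Sig * Bᵀ * B := by rw [hBSB, Matrix.mul_one]
  have h0 : P * (1 - P) = 0 := by rw [Matrix.mul_sub, Matrix.mul_one, hPP, sub_self]
  have h1 : (Matrix.diagonal d).rank = (1 - P).rank := by
    rw [hd, Matrix.rank_mul_eq_left_of_isUnit_det _ _ hS]
  have h2 : P.rank + (1 - P).rank ≤ n := by
    simpa using Matrix.rank_add_rank_le_card_of_mul_eq_zero h0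
  have hk : k ≤ P.rank := by
    have hone : B * P * (Sig * Bᵀ) = 1 := by
      calc B * P * (Sig * Bᵀ) = (B * Sig * Bᵀ) * (B * Sig * Bᵀ) := by
            simp only [hP, Matrix.mul_assoc]
      _ = 1 := by rw [hBSB, Matrix.mul_one]
    have : (1 : Matrix (Fin k) (Fin k) ℝ).rank = k := by
      rw [Matrix.rank_one, Fintype.card_fin]
    calc k = (B * P * (Sig * Bᵀ)).rank := by rw [hone, this]
      _ ≤ (B * P).rank := Matrix.rank_mul_le_left _ _
      _ ≤ P.rank := Matrix.rank_mul_le_right _ _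
  have hdiag : Fintype.card {i // d i ≠ 0} = (Matrix.diagonal d).rank :=
    (Matrix.rank_diagonal d).symm ▸ rfl
  omega

/-- **The subset factor model compromise** (Theorem 2). Suppose
`X ∼ (m, Σ)` with `Σ ≻ 0`. Then `X` follows a `k`-dimensional factor model
(allowing zero-variance unique factors) whose common factors are components,
i.e. `Z = B(X − m)`, if and only if `X` follows a `k`-dimensional subset
factor model: for some size-`k` subset `S`,
`X_{−S} = m_{−S} + W̃(X_S − m_S) + ε̃` with `Cov(X_S, ε̃) = 0` and `Cov(ε̃)`
diagonal and positive definite. -/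
theorem subset_factor_compromise {Ω : Type*} [MeasurableSpace Ω] (μ : Measure Ω)
    [IsProbabilityMeasure μ] {p k : ℕ}
    (X : Ω → Fin p → ℝ) (hX : ∀ i, MemLp (fun ω => X ω i) 2 μ)
    (m : Fin p → ℝ) (hm : m = fun i => ∫ ω, X ω i ∂μ)
    (Sig : Matrix (Fin p) (Fin p) ℝ)
    (hSig : Sig = Matrix.of fun i j => ∫ ω, (X ω i - m i) * (X ω j - m j) ∂μ)
    (hpos : Sig.PosDef) :
    (∃ (Z : Ω → Fin k → ℝ) (W : Matrix (Fin p) (Fin k) ℝ) (ε : Ω → Fin p → ℝ)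
        (B : Matrix (Fin k) (Fin p) ℝ),
      (∀ j, MemLp (fun ω => Z ω j) 2 μ) ∧
      (∀ i, MemLp (fun ω => ε ω i) 2 μ) ∧
      (∀ j, ∫ ω, Z ω j ∂μ = 0) ∧
      (∀ j l, ∫ ω, Z ω j * Z ω l ∂μ = if j = l then (1 : ℝ) else 0) ∧
      (∀ i, ∫ ω, ε ω i ∂μ = 0) ∧
      (∀ i i', i ≠ i' → ∫ ω, ε ω i * ε ω i' ∂μ = 0) ∧
      (∀ j i, ∫ ω, Z ω j * ε ω i ∂μ = 0) ∧
      (∀ᵐ ω ∂μ, ∀ i, X ω i = m i + W.mulVec (Z ω) i + ε ω i) ∧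
      (∀ᵐ ω ∂μ, Z ω = B.mulVec fun i => X ω i - m i)) ↔
    (∃ S : Finset (Fin p), S.card = k ∧
      ∃ (Wt : Matrix ↥(Sᶜ) ↥S ℝ) (εt : Ω → ↥(Sᶜ) → ℝ),
        (∀ j, MemLp (fun ω => εt ω j) 2 μ) ∧
        (∀ j, ∫ ω, εt ω j ∂μ = 0) ∧
        (∀ᵐ ω ∂μ, ∀ j : ↥(Sᶜ),
          X ω (j : Fin p) = m (j : Fin p) +
            Wt.mulVec (fun s : ↥S => X ω (s : Fin p) - m (s : Fin p)) j + εt ω j) ∧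
        (∀ (s : ↥S) (j : ↥(Sᶜ)),
          ∫ ω, (X ω (s : Fin p) - m (s : Fin p)) * εt ω j ∂μ = 0) ∧
        (∀ j l : ↥(Sᶜ), j ≠ l → ∫ ω, εt ω j * εt ω l ∂μ = 0) ∧
        (∀ j : ↥(Sᶜ), 0 < ∫ ω, (εt ω j) ^ 2 ∂μ)) := by
  classical
  constructor
  · rintro ⟨Z, W, ε, B, h1, h2, h3, h4, h5, h6, h7, h8, h9⟩
    have hXc : ∀ i, MemLp (fun ω => X ω i - m i) 2 μ :=
      fun i => (hX i).sub (memLp_const (m i))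
    have hSig' : ∀ i j, ∫ ω, (X ω i - m i) * (X ω j - m j) ∂μ = Sig i j := by
      intro i j; rw [hSig]; rfl
    have hmv : ∀ (ω : Ω) i, W.mulVec (Z ω) i = ∑ l, W i l * Z ω l := by
      intro ω i; simp [Matrix.mulVec, dotProduct]
    have hEeq : ∀ᵐ ω ∂μ, ∀ i, ε ω i = (X ω i - m i) - ∑ l, W i l * Z ω l := by
      filter_upwards [h8] with ω hω i
      rw [hω i, hmv ω i]; ring
    have hZeq : ∀ᵐ ω ∂μ, ∀ j, Z ω j = ∑ l, B j l * (X ω l - m l) := by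
      filter_upwards [h9] with ω hω j
      rw [hω]; simp [Matrix.mulVec, dotProduct]
    have hA : ∀ i j, ∫ ω, Z ω j * (X ω i - m i) ∂μ = W i j := by
      intro i j
      have e1 : ∫ ω, Z ω j * (X ω i - m i) ∂μ
          = ∫ ω, Z ω j * (ε ω i + ∑ l, W i l * Z ω l) ∂μ := by
        apply integral_congr_ae
        filter_upwards [hEeq] with ω hω
        rw [hω i]; ring_nf
      rw [e1, my_integral_mul_add_sum (h1 j) (h2 i) _ _ h1, h7 j i]
      simp [h4 j, mul_ite]
    have hA' : ∀ i j, ∫ ω, Z ω j * (X ω i - m i) ∂μ = ∑ l, B j l * Sig i l := by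
      intro i j
      rw [show (∫ ω, Z ω j * (X ω i - m i) ∂μ) = ∫ ω, (X ω i - m i) * Z ω j ∂μ by
        congr 1; funext ω; ring]
      rw [show (∫ ω, (X ω i - m i) * Z ω j ∂μ)
          = ∫ ω, (X ω i - m i) * (∑ l, B j l * (X ω l - m l)) ∂μ from
        integral_congr_ae (by filter_upwards [hZeq] with ω hω; rw [hω j])]
      rw [my_integral_mul_sum (hXc i) _ _ (fun l => hXc l)]
      exact Finset.sum_congr rfl fun l _ => by rw [hSig' i l]
    have hW : W = Sig * Bᵀ := by
      ext i j
      rw [← hA i j, hA' i j, Matrix.mul_apply]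
      exact Finset.sum_congr rfl fun l _ => by rw [Matrix.transpose_apply]; ring
    have hBW : B * W = 1 := by
      ext l j
      rw [Matrix.mul_apply, Matrix.one_apply]
      have hδ : ∫ ω, Z ω j * Z ω l ∂μ = ∑ b, B l b * ∫ ω, Z ω j * (X ω b - m b) ∂μ := by
        rw [show (∫ ω, Z ω j * Z ω l ∂μ)
            = ∫ ω, Z ω j * (∑ b, B l b * (X ω b - m b)) ∂μ from
          integral_congr_ae (by filter_upwards [hZeq] with ω hω; rw [hω l])]
        rw [my_integral_mul_sum (h1 j) _ _ (fun b => hXc b)]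
      calc ∑ b, B l b * W b j = ∫ ω, Z ω j * Z ω l ∂μ := by
            rw [hδ]; exact Finset.sum_congr rfl fun b _ => by rw [hA]
        _ = if l = j then 1 else 0 := by
            rw [h4 j l]
            by_cases h : j = l
            · simp [h]
            · rw [if_neg h, if_neg fun hh => h hh.symm]
    have hC : B * Sig * Bᵀ = 1 := by rw [Matrix.mul_assoc, ← hW, hBW]
    have hEps : ∀ i i', ∫ ω, ε ω i * ε ω i' ∂μ = Sig i i' - ∑ l, W i l * W i' l := by
      intro i i'
      have s1 : ∫ ω, ε ω i * ε ω i' ∂μ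
          = ∫ ω, ε ω i * ((X ω i' - m i') - ∑ l, W i' l * Z ω l) ∂μ :=
        integral_congr_ae (by filter_upwards [hEeq] with ω hω; rw [← hω i'])
      rw [s1, my_integral_mul_sub_sum (h2 i) (hXc i') _ _ h1]
      have hz0 : ∀ l, ∫ ω, ε ω i * Z ω l ∂μ = 0 := by
        intro l
        rw [show (∫ ω, ε ω i * Z ω l ∂μ) = ∫ ω, Z ω l * ε ω i ∂μ by
          congr 1; funext ω; ring, h7 l i]
      simp only [hz0, mul_zero, Finset.sum_const_zero, sub_zero]
      have s2 : ∫ ω, ε ω i * (X ω i' - m i') ∂μ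
          = ∫ ω, (X ω i' - m i') * ((X ω i - m i) - ∑ l, W i l * Z ω l) ∂μ := by
        rw [show (∫ ω, ε ω i * (X ω i' - m i') ∂μ)
            = ∫ ω, (X ω i' - m i') * ε ω i ∂μ by congr 1; funext ω; ring]
        exact integral_congr_ae (by filter_upwards [hEeq] with ω hω; rw [← hω i])
      rw [s2, my_integral_mul_sub_sum (hXc i') (hXc i) _ _ h1, hSig' i' i]
      have hAc : ∀ l, ∫ ω, (X ω i' - m i') * Z ω l ∂μ = W i' l := by
        intro l
        rw [show (∫ ω, (X ω i' - m i') * Z ω l ∂μ)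
            = ∫ ω, Z ω l * (X ω i' - m i') ∂μ by congr 1; funext ω; ring, hA i' l]
      simp only [hAc]
      have hsymm : Sig i' i = Sig i i' := by
        rw [← hSig' i' i, ← hSig' i i']; congr 1; funext ω; ring
      rw [hsymm]
    set d : Fin p → ℝ := fun i => ∫ ω, ε ω i * ε ω i ∂μ with hd
    have hdnn : ∀ i, 0 ≤ d i := fun i => integral_nonneg fun ω => mul_self_nonneg _
    have hdmat : Matrix.diagonal d = Sig - W * Wᵀ := by
      ext i i'
      by_cases h : i = i'
      · subst h
        rw [Matrix.diagonal_apply_eq, Matrix.sub_apply, Matrix.mul_apply]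
        show (∫ ω, ε ω i * ε ω i ∂μ) = _
        rw [hEps i i]
        simp only [Matrix.transpose_apply]
      · rw [Matrix.diagonal_apply_ne _ h, Matrix.sub_apply, Matrix.mul_apply]
        have h0 : (0:ℝ) = Sig i i' - ∑ l, W i l * W i' l := by
          rw [← hEps i i', h6 i i' h]
        rw [h0]
        simp only [Matrix.transpose_apply]
    have hdmat' : Matrix.diagonal d = (1 - Sig * Bᵀ * B) * Sig := by
      rw [hdmat, Matrix.sub_mul, Matrix.one_mul]
      congr 1
      have hsymm : Sigᵀ = Sig := by
        ext i j
        rw [Matrix.transpose_apply, ← hSig' j i, ← hSig' i j]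
        congr 1; funext ω; ring
      rw [hW, Matrix.transpose_mul, Matrix.transpose_transpose, hsymm]
      simp only [Matrix.mul_assoc]
    have hdet : IsUnit Sig.det := hpos.det_pos.ne'.isUnit
    have hcount := my_card_nonzero B Sig hdet hC d hdmat'
    set S : Finset (Fin p) := Finset.univ.filter (fun i => d i = 0) with hSdef
    have hmemS : ∀ i, i ∈ S ↔ d i = 0 := fun i => by simp [hSdef]
    have hcard1 : k ≤ S.card := by
      have hc1 : Fintype.card {i // d i ≠ 0} = (Finset.univ.filter (fun i => ¬ d i = 0)).card := by
        rw [Fintype.card_subtype]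
      have hc2 : S.card + (Finset.univ.filter (fun i => ¬ d i = 0)).card = p := by
        rw [hSdef, Finset.card_filter_add_card_filter_not, Finset.card_univ,
          Fintype.card_fin]
      omega
    have hinj : Function.Injective (fun s : ↥S => (s : Fin p)) := Subtype.val_injective
    set WS : Matrix ↥S (Fin k) ℝ := W.submatrix (fun s : ↥S => (s : Fin p)) id with hWSdef
    have hWWt : WS * WSᵀ
        = Sig.submatrix (fun s : ↥S => (s : Fin p)) (fun s : ↥S => (s : Fin p)) := by
      ext s t
      have hz : Matrix.diagonal d (s : Fin p) (t : Fin p) = 0 := by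
        by_cases hst : (s : Fin p) = (t : Fin p)
        · rw [hst, Matrix.diagonal_apply_eq]
          exact (hmemS _).mp t.2
        · exact Matrix.diagonal_apply_ne _ hst
      have hsub : Sig (s : Fin p) (t : Fin p) - (W * Wᵀ) (s : Fin p) (t : Fin p) = 0 := by
        rw [← Matrix.sub_apply, ← hdmat]; exact hz
      have hmul : (W * Wᵀ) (s : Fin p) (t : Fin p) = (WS * WSᵀ) s t := by
        rw [Matrix.mul_apply, Matrix.mul_apply]
        exact Finset.sum_congr rfl fun l _ => by
          simp [hWSdef, Matrix.transpose_apply, Matrix.submatrix_apply]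
      rw [Matrix.submatrix_apply, ← hmul]
      linarith [hsub]
    have hSSpos : (Sig.submatrix (fun s : ↥S => (s : Fin p))
        (fun s : ↥S => (s : Fin p))).PosDef := my_posdef_submatrix hpos hinj
    have hcard2 : S.card ≤ k := by
      have hle : Fintype.card ↥S ≤ k := by
        have e1 : (Sig.submatrix (fun s : ↥S => (s : Fin p))
            (fun s : ↥S => (s : Fin p))).rank = Fintype.card ↥S :=
          Matrix.rank_of_isUnit _ hSSpos.isUnit
        calc Fintype.card ↥S = (WS * WSᵀ).rank := by rw [hWWt, e1]
          _ ≤ WS.rank := Matrix.rank_mul_le_left _ _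
          _ ≤ Fintype.card (Fin k) := Matrix.rank_le_card_width _
          _ = k := Fintype.card_fin k
      rwa [Fintype.card_coe] at hle
    have hcardS : S.card = k := le_antisymm hcard2 hcard1
    let e : ↥S ≃ Fin k := S.equivFin.trans (finCongr hcardS)
    set Ws' : Matrix (Fin k) (Fin k) ℝ := WS.submatrix e.symm id with hWs'def
    have hWs'mul : Ws' * Ws'ᵀ = (Sig.submatrix (fun s : ↥S => (s : Fin p))
        (fun s : ↥S => (s : Fin p))).submatrix e.symm e.symm := by
      ext a b
      rw [Matrix.submatrix_apply, ← hWWt, Matrix.mul_apply, Matrix.mul_apply]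
      exact Finset.sum_congr rfl fun l _ => by
        simp [hWs'def, Matrix.transpose_apply, Matrix.submatrix_apply]
    have hpos' : ((Sig.submatrix (fun s : ↥S => (s : Fin p))
        (fun s : ↥S => (s : Fin p))).submatrix e.symm e.symm).PosDef := by
      rw [Matrix.submatrix_submatrix]
      exact my_posdef_submatrix hpos (hinj.comp e.symm.injective)
    have hdetWs : IsUnit Ws'.det := by
      have hne : Ws'.det * Ws'.det ≠ 0 := by
        have hdd : (Ws' * Ws'ᵀ).det = Ws'.det * Ws'.det := by
          rw [Matrix.det_mul, Matrix.det_transpose]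
        rw [← hdd, hWs'mul]
        exact hpos'.det_pos.ne'
      exact isUnit_iff_ne_zero.mpr fun h0 => hne (by rw [h0, mul_zero])
    set Winv : Matrix (Fin k) (Fin k) ℝ := Ws'⁻¹ with hWinvdef
    have hWinv : Winv * Ws' = 1 := Matrix.nonsing_inv_mul _ hdetWs
    have hmid : (Winv.submatrix id ⇑e) * WS = 1 := by
      have hws : WS = Ws'.submatrix ⇑e id := by
        ext s l
        simp [hWs'def, Matrix.submatrix_apply]
      rw [hws, Matrix.submatrix_mul_equiv Winv Ws' id e id, hWinv, Matrix.submatrix_id_id]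
    set Wt : Matrix ↥(Sᶜ) ↥S ℝ :=
      (W.submatrix (fun j : ↥(Sᶜ) => (j : Fin p)) id) * (Winv.submatrix id ⇑e) with hWtdef
    have hepsS : ∀ s : Fin p, s ∈ S → ∀ᵐ ω ∂μ, ε ω s = 0 := by
      intro s hs
      have hint : Integrable (fun ω => ε ω s * ε ω s) μ := my_int_mul (h2 s) (h2 s)
      have hz : ∫ ω, ε ω s * ε ω s ∂μ = 0 := (hmemS s).mp hs
      have hae := (integral_eq_zero_iff_of_nonneg
        (fun ω => mul_self_nonneg (ε ω s)) hint).mp hz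
      filter_upwards [hae] with ω hω
      exact mul_self_eq_zero.mp hω
    have hGood : ∀ᵐ ω ∂μ, (∀ i, X ω i = m i + W.mulVec (Z ω) i + ε ω i)
        ∧ ∀ s : Fin p, s ∈ S → ε ω s = 0 := by
      have hall : ∀ᵐ ω ∂μ, ∀ s : Fin p, s ∈ S → ε ω s = 0 := by
        rw [ae_all_iff]
        intro s
        by_cases hs : s ∈ S
        · filter_upwards [hepsS s hs] with ω hω _
          exact hω
        · exact Filter.Eventually.of_forall fun ω hss => absurd hss hs
      filter_upwards [h8, hall] with ω hω1 hω2
      exact ⟨hω1, hω2⟩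
    have hXS : ∀ ω, (∀ i, X ω i = m i + W.mulVec (Z ω) i + ε ω i) →
        (∀ s : Fin p, s ∈ S → ε ω s = 0) →
        (fun s : ↥S => X ω (s : Fin p) - m (s : Fin p)) = WS.mulVec (Z ω) := by
      intro ω hω1 hω2
      funext s
      have hx : X ω (s : Fin p) - m (s : Fin p) = W.mulVec (Z ω) (s : Fin p) := by
        rw [hω1 (s : Fin p), hω2 _ s.2]; ring
      rw [hx]
      simp [hWSdef, Matrix.mulVec, dotProduct, Matrix.submatrix_apply]
    refine ⟨S, hcardS, Wt, fun ω j => ε ω (j : Fin p), fun j => h2 _, fun j => h5 _,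
      ?_, ?_, ?_, ?_⟩
    · filter_upwards [hGood] with ω hω j
      have hvec := hXS ω hω.1 hω.2
      have hkey : Wt.mulVec (fun s : ↥S => X ω (s : Fin p) - m (s : Fin p)) j
          = W.mulVec (Z ω) (j : Fin p) := by
        rw [hvec, Matrix.mulVec_mulVec, hWtdef, Matrix.mul_assoc, hmid, Matrix.mul_one]
        simp [Matrix.mulVec, dotProduct, Matrix.submatrix_apply]
      rw [hkey]
      exact hω.1 (j : Fin p)
    · intro s j
      have hae : ∀ᵐ ω ∂μ, (X ω (s : Fin p) - m (s : Fin p)) * ε ω (j : Fin p)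
          = ε ω (j : Fin p) * (∑ l, W (s : Fin p) l * Z ω l) := by
        filter_upwards [hGood] with ω hω
        have hx : X ω (s : Fin p) - m (s : Fin p) = W.mulVec (Z ω) (s : Fin p) := by
          rw [hω.1 (s : Fin p), hω.2 _ s.2]; ring
        rw [hx, hmv ω (s : Fin p)]; ring
      rw [integral_congr_ae hae, my_integral_mul_sum (h2 _) _ _ h1]
      apply Finset.sum_eq_zero
      intro l _
      rw [show (∫ ω, ε ω (j : Fin p) * Z ω l ∂μ) = ∫ ω, Z ω l * ε ω (j : Fin p) ∂μ by
        congr 1; funext ω; ring, h7 l _]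
      ring
    · intro j l hjl
      exact h6 _ _ fun hc => hjl (Subtype.ext hc)
    · intro j
      have hj : (j : Fin p) ∉ S := by
        have hmem := j.2
        rw [Finset.mem_compl] at hmem
        exact hmem
      have hne : d (j : Fin p) ≠ 0 := fun h0 => hj ((hmemS _).mpr h0)
      have hlt : 0 < d (j : Fin p) := lt_of_le_of_ne (hdnn _) (Ne.symm hne)
      have heq : ∫ ω, (ε ω (j : Fin p)) ^ 2 ∂μ = d (j : Fin p) := by
        simp only [hd]
        congr 1; funext ω; ring
      simpa [heq] using hlt
  · rintro ⟨S, hcardS, Wt, εt, ht1, ht2, ht3, ht4, ht5, ht6⟩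
    have hXc : ∀ i, MemLp (fun ω => X ω i - m i) 2 μ :=
      fun i => (hX i).sub (memLp_const (m i))
    have hSig' : ∀ i j, ∫ ω, (X ω i - m i) * (X ω j - m j) ∂μ = Sig i j := by
      intro i j; rw [hSig]; rfl
    have hmean0 : ∀ i, ∫ ω, (X ω i - m i) ∂μ = 0 := by
      intro i
      rw [integral_sub ((hX i).integrable one_le_two) (integrable_const _),
        integral_const]
      simp [hm]
    have hinj : Function.Injective (fun s : ↥S => (s : Fin p)) := Subtype.val_injective
    let e : ↥S ≃ Fin k := S.equivFin.trans (finCongr hcardS)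
    set SS : Matrix ↥S ↥S ℝ := Sig.submatrix (fun s : ↥S => (s : Fin p))
      (fun s : ↥S => (s : Fin p)) with hSSdef
    set SK : Matrix (Fin k) (Fin k) ℝ := SS.submatrix ⇑e.symm ⇑e.symm with hSKdef
    have hSKpos : SK.PosDef := by
      rw [hSKdef, hSSdef, Matrix.submatrix_submatrix]
      exact my_posdef_submatrix hpos (hinj.comp e.symm.injective)
    have hsd : SK.PosSemidef := hSKpos.posSemidef
    open scoped MatrixOrder in
    set R : Matrix (Fin k) (Fin k) ℝ := CFC.sqrt SK with hRdef
    have hRR : R * R = SK := by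
      open scoped MatrixOrder in exact CFC.sqrt_mul_sqrt_self SK hsd.nonneg
    have hRsym : Rᵀ = R := by
      have hh : Rᴴ = R := by
        open scoped MatrixOrder in exact (CFC.sqrt_nonneg SK).posSemidef.1
      calc Rᵀ = Rᴴ := by
            ext i j
            simp [Matrix.conjTranspose_apply, Matrix.transpose_apply]
        _ = R := hh
    have hdetR : IsUnit R.det := by
      have hne : R.det * R.det ≠ 0 := by
        have hdd : SK.det = R.det * R.det := by rw [← hRR, Matrix.det_mul]
        rw [← hdd]
        exact hSKpos.det_pos.ne'
      exact isUnit_iff_ne_zero.mpr fun h0 => hne (by rw [h0, mul_zero])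
    set Rinv : Matrix (Fin k) (Fin k) ℝ := R⁻¹ with hRinvdef
    have hRinvR : Rinv * R = 1 := Matrix.nonsing_inv_mul _ hdetR
    have hRRinv : R * Rinv = 1 := Matrix.mul_nonsing_inv _ hdetR
    have hRinvSym : Rinvᵀ = Rinv := by rw [hRinvdef, Matrix.transpose_nonsing_inv, hRsym]
    have hRSR : Rinv * SK * Rinvᵀ = 1 := by
      rw [hRinvSym, ← hRR, ← Matrix.mul_assoc, hRinvR, Matrix.one_mul, hRRinv]
    set A : Matrix (Fin k) ↥S ℝ := Rinv.submatrix id ⇑e with hAdef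
    set L : Matrix ↥S (Fin k) ℝ := R.submatrix ⇑e id with hLdef
    have hLA : L * A = (1 : Matrix ↥S ↥S ℝ) := by
      rw [hLdef, hAdef, ← Matrix.submatrix_mul R Rinv ⇑e id ⇑e Function.bijective_id,
        hRRinv]
      ext s t
      simp [Matrix.submatrix_apply, Matrix.one_apply, EmbeddingLike.apply_eq_iff_eq]
    have hSSK : SS = SK.submatrix ⇑e ⇑e := by
      rw [hSKdef, Matrix.submatrix_submatrix]
      ext s t
      simp [Matrix.submatrix_apply]
    have hASA : A * SS * Aᵀ = (1 : Matrix (Fin k) (Fin k) ℝ) := by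
      have e1 : A * SS = (Rinv * SK).submatrix id ⇑e := by
        rw [hAdef, hSSK]
        exact (Matrix.submatrix_mul Rinv SK id ⇑e ⇑e e.bijective).symm
      have e2 : Aᵀ = Rinvᵀ.submatrix ⇑e id := by
        rw [hAdef, Matrix.transpose_submatrix]
      rw [e1, e2, ← Matrix.submatrix_mul (Rinv * SK) Rinvᵀ id ⇑e id e.bijective,
        Matrix.submatrix_id_id, hRSR]
    set Zf : Ω → Fin k → ℝ :=
      fun ω j => ∑ s : ↥S, A j s * (X ω (s : Fin p) - m (s : Fin p)) with hZdef
    set εf : Ω → Fin p → ℝ := fun ω i =>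
      if h : i ∈ S then 0 else εt ω ⟨i, Finset.mem_compl.mpr h⟩ with hεdef
    set Wm : Matrix (Fin p) (Fin k) ℝ := Matrix.of (fun i l =>
      if h : i ∈ S then L ⟨i, h⟩ l else (Wt * L) ⟨i, Finset.mem_compl.mpr h⟩ l) with hWmdef
    set Bm : Matrix (Fin k) (Fin p) ℝ := Matrix.of (fun l i =>
      if h : i ∈ S then A l ⟨i, h⟩ else 0) with hBmdef
    have hZmem : ∀ j, MemLp (fun ω => Zf ω j) 2 μ := by
      intro j
      exact my_memLp_sum (fun s : ↥S => A j s)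
        (fun s ω => X ω (s : Fin p) - m (s : Fin p)) (fun s => hXc _)
    have hZXc : ∀ j t, ∫ ω, Zf ω j * (X ω (t : Fin p) - m (t : Fin p)) ∂μ
        = ∑ s : ↥S, A j s * Sig (t : Fin p) (s : Fin p) := by
      intro j t
      rw [show (∫ ω, Zf ω j * (X ω (t : Fin p) - m (t : Fin p)) ∂μ)
          = ∫ ω, (X ω (t : Fin p) - m (t : Fin p))
              * (∑ s : ↥S, A j s * (X ω (s : Fin p) - m (s : Fin p))) ∂μ by
        congr 1; funext ω; simp only [hZdef]; ring]
      rw [my_integral_mul_sum (hXc _) _ _ (fun s => hXc _)]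
      exact Finset.sum_congr rfl fun s _ => by rw [hSig']
    refine ⟨Zf, Wm, εf, Bm, hZmem, ?_, ?_, ?_, ?_, ?_, ?_, ?_, ?_⟩
    · intro i
      by_cases h : i ∈ S
      · simp only [hεdef, dif_pos h]
        exact memLp_const 0
      · simp only [hεdef, dif_neg h]
        exact ht1 _
    · intro j
      simp only [hZdef]
      rw [my_integral_sum (fun s : ↥S => A j s)
        (fun s ω => X ω (s : Fin p) - m (s : Fin p)) (fun s => hXc _)]
      apply Finset.sum_eq_zero
      intro s _
      rw [hmean0]
      ring
    · intro j l
      have step1 : ∫ ω, Zf ω j * Zf ω l ∂μ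
          = ∑ t : ↥S, A l t * ∫ ω, Zf ω j * (X ω (t : Fin p) - m (t : Fin p)) ∂μ := by
        exact my_integral_mul_sum (hZmem j) (fun t : ↥S => A l t)
          (fun t ω => X ω (t : Fin p) - m (t : Fin p)) (fun t => hXc _)
      have step2 : ∫ ω, Zf ω j * Zf ω l ∂μ = (A * SS * Aᵀ) l j := by
        rw [step1]
        simp_rw [hZXc]
        have lhs : ∑ t : ↥S, A l t * ∑ s : ↥S, A j s * Sig (t : Fin p) (s : Fin p)
            = ∑ s : ↥S, (∑ t : ↥S, A l t * Sig (t : Fin p) (s : Fin p)) * A j s := by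
          simp_rw [Finset.mul_sum, Finset.sum_mul]
          rw [Finset.sum_comm]
          apply Finset.sum_congr rfl; intro s _
          apply Finset.sum_congr rfl; intro t _
          ring
        rw [lhs, Matrix.mul_apply]
        apply Finset.sum_congr rfl; intro s _
        rw [Matrix.transpose_apply, Matrix.mul_apply]
        simp only [hSSdef, Matrix.submatrix_apply]
      rw [step2, hASA, Matrix.one_apply]
      by_cases h : j = l
      · simp [h]
      · rw [if_neg fun hh => h hh.symm, if_neg h]
    · intro i
      by_cases h : i ∈ S
      · simp [hεdef, dif_pos h]
      · simp only [hεdef, dif_neg h]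
        exact ht2 _
    · intro i i' hne
      by_cases h : i ∈ S
      · simp [hεdef, dif_pos h]
      · by_cases h' : i' ∈ S
        · simp [hεdef, dif_pos h']
        · simp only [hεdef, dif_neg h, dif_neg h']
          exact ht5 _ _ fun hc => hne (congrArg Subtype.val hc)
    · intro j i
      by_cases h : i ∈ S
      · simp [hεdef, dif_pos h]
      · simp only [hεdef, dif_neg h]
        rw [show (∫ ω, Zf ω j * εt ω ⟨i, Finset.mem_compl.mpr h⟩ ∂μ)
            = ∫ ω, εt ω ⟨i, Finset.mem_compl.mpr h⟩
                * (∑ s : ↥S, A j s * (X ω (s : Fin p) - m (s : Fin p))) ∂μ by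
          congr 1; funext ω; simp only [hZdef]; ring]
        rw [my_integral_mul_sum (ht1 _) _ _ (fun s => hXc _)]
        apply Finset.sum_eq_zero; intro s _
        rw [show (∫ ω, εt ω ⟨i, Finset.mem_compl.mpr h⟩
              * (X ω (s : Fin p) - m (s : Fin p)) ∂μ)
            = ∫ ω, (X ω (s : Fin p) - m (s : Fin p))
                * εt ω ⟨i, Finset.mem_compl.mpr h⟩ ∂μ by congr 1; funext ω; ring]
        rw [ht4 s _]
        ring
    · filter_upwards [ht3] with ω hω
      intro i
      set v : ↥S → ℝ := fun s => X ω (s : Fin p) - m (s : Fin p) with hv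
      have hZv : Zf ω = A *ᵥ v := by
        funext l
        simp only [hZdef, Matrix.mulVec, dotProduct, hv]
      by_cases h : i ∈ S
      · have e1 : Wm.mulVec (Zf ω) i = ((L * A) *ᵥ v) ⟨i, h⟩ := by
          rw [← Matrix.mulVec_mulVec, ← hZv]
          simp only [Matrix.mulVec, dotProduct, hWmdef, Matrix.of_apply, dif_pos h]
        rw [e1, hLA, Matrix.one_mulVec]
        simp only [hεdef, dif_pos h, hv]
        ring
      · have e1 : Wm.mulVec (Zf ω) i = ((Wt * L) *ᵥ (A *ᵥ v)) ⟨i, Finset.mem_compl.mpr h⟩ := by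
          rw [← hZv]
          simp only [Matrix.mulVec, dotProduct, hWmdef, Matrix.of_apply, dif_neg h]
        have e2 : (Wt * L) *ᵥ (A *ᵥ v) = Wt *ᵥ v := by
          rw [Matrix.mulVec_mulVec, Matrix.mul_assoc, hLA, Matrix.mul_one]
        rw [e1, e2]
        simp only [hεdef, dif_neg h]
        exact hω ⟨i, Finset.mem_compl.mpr h⟩
    · apply Filter.Eventually.of_forall
      intro ω
      funext j
      simp only [hZdef, Matrix.mulVec, dotProduct, hBmdef, Matrix.of_apply]
      rw [show (∑ i : Fin p, (if h : i ∈ S then A j ⟨i, h⟩ else 0) * (X ω i - m i))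
          = ∑ i : Fin p, (if h : i ∈ S then A j ⟨i, h⟩ * (X ω i - m i) else 0) from
        Finset.sum_congr rfl fun i _ => by by_cases h : i ∈ S <;> simp [h]]
      rw [← Finset.sum_subset (Finset.subset_univ S) (fun x _ hx => dif_neg hx)]
      rw [← Finset.sum_coe_sort S
        (fun i => if h : i ∈ S then A j ⟨i, h⟩ * (X ω i - m i) else 0)]
      apply Finset.sum_congr rfl
      intro s _
      simp only [dif_pos s.2]
end

section
/- Let Σ ∈ R^{p×p} be positive semidefinite, U ⊂ [p], i ∉ U, and β = Σ_{•i} − Σ_{•U} Σ_U⁺ Σ_{U,i}, with β_i > 0. Writing Σ_R = Σ − Σ_{•U} Σ_U⁺ Σ_{U•} and Σ_R' = Σ − Σ_{•,U∪{i}} Σ_{U∪{i}}⁺ Σ_{U∪{i},•}, the squared Frobenius norms satisfy ‖Σ_R'‖_F² = ‖Σ_R‖_F² + ‖β‖₂⁴/β_i² − 2βᵀΣ_Rβ/β_i. -/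
open MeasureTheory Matrix

namespace FRU

/-! ### Penrose equations: basic theory -/

def Pinv {m n : Type*} [Fintype m] [Fintype n] (A : Matrix m n ℝ) (B : Matrix n m ℝ) : Prop :=
  A * B * A = A ∧ B * A * B = B ∧ (A * B)ᵀ = A * B ∧ (B * A)ᵀ = B * A

theorem mpinv_spec {m n : Type*} [Fintype m] [Fintype n] (A : Matrix m n ℝ)
    (h : ∃ B : Matrix n m ℝ,
      A * B * A = A ∧ B * A * B = B ∧ (A * B)ᵀ = A * B ∧ (B * A)ᵀ = B * A) :
    Pinv A (mpinv A) := by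
  unfold mpinv
  rw [dif_pos h]
  exact h.choose_spec

theorem pinv_unique {m n : Type*} [Fintype m] [Fintype n] {A : Matrix m n ℝ}
    {B C : Matrix n m ℝ} (hB : Pinv A B) (hC : Pinv A C) : B = C := by
  obtain ⟨hB1, hB2, hB3, hB4⟩ := hB
  obtain ⟨hC1, hC2, hC3, hC4⟩ := hC
  have e1 : B = B * A * C := by
    calc B = B * A * B := hB2.symm
    _ = B * (A * B)ᵀ := by rw [hB3, Matrix.mul_assoc]
    _ = B * (A * C * A * B)ᵀ := by rw [hC1]
    _ = B * ((A * B)ᵀ * (A * C)ᵀ) := by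
        rw [← Matrix.transpose_mul]
        simp only [Matrix.mul_assoc]
    _ = B * (A * B * (A * C)) := by rw [hB3, hC3]
    _ = B * A * B * A * C := by simp only [Matrix.mul_assoc]
    _ = B * A * C := by rw [hB2]
  have e2 : C = B * A * C := by
    calc C = C * A * C := hC2.symm
    _ = (C * A)ᵀ * C := by rw [hC4]
    _ = (C * (A * B * A))ᵀ * C := by rw [hB1]
    _ = ((B * A)ᵀ * (C * A)ᵀ) * C := by
        rw [← Matrix.transpose_mul]
        simp only [Matrix.mul_assoc]
    _ = B * A * (C * A) * C := by rw [hB4, hC4, Matrix.mul_assoc]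
    _ = B * A * (C * A * C) := by simp only [Matrix.mul_assoc]
    _ = B * A * C := by rw [hC2]
  rw [e1, ← e2]

section Square
variable {n : Type*} [Fintype n] [DecidableEq n]

theorem sandwich_mul (V : Matrix n n ℝ) (h2 : Vᵀ * V = 1) (e f : n → ℝ) :
    (V * diagonal e * Vᵀ) * (V * diagonal f * Vᵀ) = V * diagonal (fun j => e j * f j) * Vᵀ := by
  calc (V * diagonal e * Vᵀ) * (V * diagonal f * Vᵀ)
      = V * diagonal e * (Vᵀ * V) * diagonal f * Vᵀ := by simp only [Matrix.mul_assoc]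
    _ = V * (diagonal e * diagonal f) * Vᵀ := by
        rw [h2]; simp only [Matrix.mul_one, Matrix.mul_assoc]
    _ = V * diagonal (fun j => e j * f j) * Vᵀ := by rw [diagonal_mul_diagonal]

theorem exists_pinv_of_posSemidef {A : Matrix n n ℝ} (hA : A.PosSemidef) :
    ∃ B : Matrix n n ℝ,
      A * B * A = A ∧ B * A * B = B ∧ (A * B)ᵀ = A * B ∧ (B * A)ᵀ = B * A := by
  have hH : A.IsHermitian := hA.1
  set V : Matrix n n ℝ := (hH.eigenvectorUnitary : Matrix n n ℝ) with hV
  have hVmem := hH.eigenvectorUnitary.2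
  have h2 : Vᵀ * V = 1 := by
    rw [← Matrix.conjTranspose_eq_transpose_of_trivial]
    exact (Matrix.mem_unitaryGroup_iff').mp hVmem
  set d : n → ℝ := hH.eigenvalues with hd
  have hspec : A = V * diagonal d * Vᵀ := by
    have := hH.spectral_theorem
    simpa [Matrix.star_eq_conjTranspose, Matrix.conjTranspose_eq_transpose_of_trivial, Function.comp] using this
  set d' : n → ℝ := fun j => if d j = 0 then 0 else (d j)⁻¹ with hd'
  refine ⟨V * diagonal d' * Vᵀ, ?_, ?_, ?_, ?_⟩
  · rw [hspec, sandwich_mul V h2, sandwich_mul V h2]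
    rw [show (fun j => d j * d' j * d j) = d by
      funext j; by_cases h : d j = 0
      · simp [hd', h]
      · simp [hd', h]]
  · rw [hspec, sandwich_mul V h2, sandwich_mul V h2]
    rw [show (fun j => d' j * d j * d' j) = d' by
      funext j; by_cases h : d j = 0
      · simp [hd', h]
      · simp [hd', h]]
  · rw [hspec, sandwich_mul V h2]
    simp only [Matrix.transpose_mul, Matrix.transpose_transpose, diagonal_transpose]
    simp only [Matrix.mul_assoc]
  · rw [hspec, sandwich_mul V h2]
    simp only [Matrix.transpose_mul, Matrix.transpose_transpose, diagonal_transpose]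
    simp only [Matrix.mul_assoc]

end Square

section SquareNoDec
variable {n : Type*} [Fintype n]

theorem pinv_transpose {A B : Matrix n n ℝ} (hA : Aᵀ = A) (hB : Pinv A B) : Pinv A Bᵀ := by
  obtain ⟨h1, h2, h3, h4⟩ := hB
  have hBA : A * Bᵀ = B * A := by
    calc A * Bᵀ = Aᵀ * Bᵀ := by rw [hA]
    _ = (B * A)ᵀ := by rw [Matrix.transpose_mul]
    _ = B * A := h4
  have hAB : Bᵀ * A = A * B := by
    calc Bᵀ * A = Bᵀ * Aᵀ := by rw [hA]
    _ = (A * B)ᵀ := by rw [Matrix.transpose_mul]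
    _ = A * B := h3
  refine ⟨?_, ?_, ?_, ?_⟩
  · calc A * Bᵀ * A
        = (Aᵀ * B * Aᵀ)ᵀ := by
          simp only [Matrix.transpose_mul, Matrix.transpose_transpose, hA, Matrix.mul_assoc]
      _ = (A * B * A)ᵀ := by rw [hA]
      _ = Aᵀ := by rw [h1]
      _ = A := hA
  · calc Bᵀ * A * Bᵀ
        = (B * (A * B))ᵀ := by
          simp only [Matrix.transpose_mul, Matrix.transpose_transpose, hA, Matrix.mul_assoc]
      _ = (B * A * B)ᵀ := by rw [Matrix.mul_assoc]
      _ = Bᵀ := by rw [h2]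
  · rw [hBA, h4]
  · rw [hAB, h3]

theorem trace_mul_vecMulVec (A : Matrix n n ℝ) (v w : n → ℝ) :
    Matrix.trace (A * vecMulVec v w) = w ⬝ᵥ (A *ᵥ v) := by
  simp only [Matrix.trace, Matrix.diag, Matrix.mul_apply, vecMulVec_apply, dotProduct,
    Matrix.mulVec, Finset.mul_sum]
  refine Finset.sum_congr rfl fun j _ => Finset.sum_congr rfl fun k _ => by ring

theorem vecMulVec_transpose' {m : Type*} (v : m → ℝ) (w : n → ℝ) :
    (vecMulVec v w)ᵀ = vecMulVec w v := by
  ext a b; simp [vecMulVec_apply, mul_comm]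

theorem trace_rank_one_update (A : Matrix n n ℝ) (v : n → ℝ) (c : ℝ) (hc : c ≠ 0) :
    Matrix.trace ((A - c⁻¹ • vecMulVec v v)ᵀ * (A - c⁻¹ • vecMulVec v v)) =
      Matrix.trace (Aᵀ * A) + (∑ j, v j ^ 2) ^ 2 / c ^ 2 - 2 * (v ⬝ᵥ A.mulVec v) / c := by
  have hWt : (vecMulVec v v)ᵀ = vecMulVec v v := vecMulVec_transpose' v v
  have h1 : Matrix.trace (Aᵀ * vecMulVec v v) = v ⬝ᵥ A.mulVec v := by
    rw [trace_mul_vecMulVec, Matrix.mulVec_transpose, Matrix.dotProduct_mulVec]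
    exact dotProduct_comm _ _
  have h2 : Matrix.trace (vecMulVec v v * A) = v ⬝ᵥ A.mulVec v := by
    rw [Matrix.trace_mul_comm, trace_mul_vecMulVec]
  have h3 : Matrix.trace (vecMulVec v v * vecMulVec v v) = (∑ j, v j ^ 2) ^ 2 := by
    rw [trace_mul_vecMulVec]
    have hmv : vecMulVec v v *ᵥ v = (v ⬝ᵥ v) • v := by
      funext k
      simp only [Matrix.mulVec, vecMulVec_apply, dotProduct, Pi.smul_apply, smul_eq_mul,
        Finset.sum_mul]
      refine Finset.sum_congr rfl fun j _ => by ring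
    rw [hmv, dotProduct_smul]
    have hvv : v ⬝ᵥ v = ∑ j, v j ^ 2 := by simp [dotProduct, pow_two]
    rw [hvv, smul_eq_mul, pow_two]
  rw [Matrix.transpose_sub, Matrix.transpose_smul, hWt]
  simp only [Matrix.sub_mul, Matrix.mul_sub, Matrix.smul_mul, Matrix.mul_smul,
    Matrix.trace_sub, Matrix.trace_smul, smul_smul, smul_eq_mul, h1, h2, h3]
  field_simp
  ring

end SquareNoDec

section Proj
variable {m u : Type*} [Fintype m] [Fintype u]

theorem proj_mul_self (M : Matrix m u ℝ) (B : Matrix u u ℝ)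
    (hP : (Mᵀ * M) * B * (Mᵀ * M) = Mᵀ * M) (hBs : Bᵀ = B) :
    (M * B * Mᵀ) * M = M := by
  have h1r : Mᵀ * (M * (B * (Mᵀ * M))) = Mᵀ * M := by
    simpa only [Matrix.mul_assoc] using hP
  set E : Matrix m u ℝ := M * (B * (Mᵀ * M)) - M with hE
  have hEt : Eᵀ = Mᵀ * (M * (B * Mᵀ)) - Mᵀ := by
    simp [hE, Matrix.transpose_sub, Matrix.transpose_mul, hBs, Matrix.mul_assoc]
  have h0 : Eᵀ * E = 0 := by
    rw [hEt, hE]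
    simp only [Matrix.sub_mul, Matrix.mul_sub, Matrix.mul_assoc]
    simp only [h1r]
    abel
  have hE0 : E = 0 := by
    have h := (Matrix.conjTranspose_mul_self_eq_zero (A := E)).mp
    apply h
    rw [Matrix.conjTranspose_eq_transpose_of_trivial]
    exact h0
  have : M * (B * (Mᵀ * M)) = M := sub_eq_zero.mp hE0
  simpa only [Matrix.mul_assoc] using this

theorem proj_idem (M : Matrix m u ℝ) (B : Matrix u u ℝ)
    (hP : (Mᵀ * M) * B * (Mᵀ * M) = Mᵀ * M) (hBs : Bᵀ = B) :
    (M * B * Mᵀ) * (M * B * Mᵀ) = M * B * Mᵀ := by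
  calc (M * B * Mᵀ) * (M * B * Mᵀ) = ((M * B * Mᵀ) * M) * (B * Mᵀ) := by
        simp only [Matrix.mul_assoc]
    _ = M * (B * Mᵀ) := by rw [proj_mul_self M B hP hBs]
    _ = M * B * Mᵀ := by rw [Matrix.mul_assoc]

omit [Fintype m] in
theorem proj_symm (M : Matrix m u ℝ) (B : Matrix u u ℝ) (hBs : Bᵀ = B) :
    (M * B * Mᵀ)ᵀ = M * B * Mᵀ := by
  simp [Matrix.transpose_mul, hBs, Matrix.mul_assoc]

end Proj

section VecLemmas
variable {l m n : Type*} [Fintype m] [Fintype n]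

theorem mul_vecMulVec (A : Matrix l n ℝ) (v : n → ℝ) (w : m → ℝ) :
    A * vecMulVec v w = vecMulVec (A *ᵥ v) w := by
  ext a b
  simp only [Matrix.mul_apply, vecMulVec_apply, Matrix.mulVec, dotProduct, Finset.sum_mul]
  exact Finset.sum_congr rfl fun j _ => by ring

theorem vecMulVec_mul (v : l → ℝ) (w : n → ℝ) (A : Matrix n m ℝ) :
    vecMulVec v w * A = vecMulVec v (w ᵥ* A) := by
  ext a b
  simp only [Matrix.mul_apply, vecMulVec_apply, Matrix.vecMul, dotProduct, Finset.mul_sum]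
  exact Finset.sum_congr rfl fun j _ => by ring

theorem vecMulVec_mulVec (v : m → ℝ) (w : n → ℝ) (x : n → ℝ) :
    vecMulVec v w *ᵥ x = (w ⬝ᵥ x) • v := by
  funext k
  simp only [Matrix.mulVec, vecMulVec_apply, dotProduct, Pi.smul_apply, smul_eq_mul,
    Finset.sum_mul]
  exact Finset.sum_congr rfl fun j _ => by ring

theorem dot_mulVec_left (A : Matrix m n ℝ) (x : n → ℝ) (y : m → ℝ) :
    (A *ᵥ x) ⬝ᵥ y = x ⬝ᵥ (Aᵀ *ᵥ y) := by
  rw [dotProduct_comm, Matrix.dotProduct_mulVec, Matrix.mulVec_transpose, dotProduct_comm]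

end VecLemmas

end FRU

open FRU in

/-- **Frobenius norm residual update.** For positive semidefinite `Σ`,
`U ⊂ [p]`, `i ∉ U`, and `β = Σ_{•i} − Σ_{•U} Σ_U⁺ Σ_{U,i}` with `β_i > 0`,
the residual covariances `Σ_R = Σ − Σ_{•U} Σ_U⁺ Σ_{U•}` and
`Σ_R' = Σ − Σ_{•,U∪{i}} Σ_{U∪{i}}⁺ Σ_{U∪{i},•}` satisfy
`‖Σ_R'‖_F² = ‖Σ_R‖_F² + ‖β‖₂⁴/β_i² − 2βᵀΣ_Rβ/β_i`. -/
theorem frobenius_residual_update {p : ℕ} (Sig : Matrix (Fin p) (Fin p) ℝ)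
    (hSig : Sig.PosSemidef)
    (U : Finset (Fin p)) (i : Fin p) (hi : i ∉ U)
    (SigR SigR' : Matrix (Fin p) (Fin p) ℝ)
    (hR : SigR = Sig - Sig.submatrix id (fun j : ↥U => (j : Fin p)) *
        mpinv (Sig.submatrix (fun j : ↥U => (j : Fin p)) (fun j : ↥U => (j : Fin p))) *
        Sig.submatrix (fun j : ↥U => (j : Fin p)) id)
    (hR' : SigR' = Sig -
        Sig.submatrix id (fun j : ↥(insert i U) => (j : Fin p)) *
          mpinv (Sig.submatrix (fun j : ↥(insert i U) => (j : Fin p))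
            (fun j : ↥(insert i U) => (j : Fin p))) *
          Sig.submatrix (fun j : ↥(insert i U) => (j : Fin p)) id)
    (β : Fin p → ℝ) (hβ : β = fun j => SigR j i) (hβi : 0 < β i) :
    Matrix.trace (SigR'ᵀ * SigR') =
      Matrix.trace (SigRᵀ * SigR) +
        (∑ j, β j ^ 2) ^ 2 / β i ^ 2 - 2 * (β ⬝ᵥ SigR.mulVec β) / β i := by
  classical
  have hc0 : β i ≠ 0 := ne_of_gt hβi
  -- square root of Sig
  obtain ⟨X, hXs, hXX⟩ : ∃ X : Matrix (Fin p) (Fin p) ℝ, Xᵀ = X ∧ X * X = Sig := by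
    open scoped MatrixOrder in refine ⟨CFC.sqrt Sig, ?_, CFC.sqrt_mul_sqrt_self Sig hSig.nonneg⟩
    rw [← Matrix.conjTranspose_eq_transpose_of_trivial]
    open scoped MatrixOrder in exact (CFC.sqrt_nonneg Sig).posSemidef.1
  have hXe : ∀ a b, X a b = X b a := by
    intro a b
    rw [← Matrix.transpose_apply X b a, hXs]
  -- abbreviations
  set BU := mpinv (Sig.submatrix (fun j : ↥U => (j : Fin p)) (fun j : ↥U => (j : Fin p)))
    with hBUdef
  set BV := mpinv (Sig.submatrix (fun j : ↥(insert i U) => (j : Fin p))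
    (fun j : ↥(insert i U) => (j : Fin p))) with hBVdef
  set M : Matrix (Fin p) ↥U ℝ := X.submatrix id (fun j : ↥U => (j : Fin p)) with hMdef
  set N : Matrix (Fin p) ↥(insert i U) ℝ :=
    X.submatrix id (fun j : ↥(insert i U) => (j : Fin p)) with hNdef
  -- submatrix identities
  have hsub1 : Sig.submatrix id (fun j : ↥U => (j : Fin p)) = X * M := by
    ext a b
    rw [← hXX]
    simp [hMdef, Matrix.mul_apply, Matrix.submatrix_apply]
  have hsub2 : Sig.submatrix (fun j : ↥U => (j : Fin p)) id = Mᵀ * X := by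
    ext a b
    rw [← hXX]
    simp only [hMdef, Matrix.mul_apply, Matrix.submatrix_apply, Matrix.transpose_apply, id_eq]
    exact Finset.sum_congr rfl fun k _ => by rw [hXe]
  have hsub3 : Sig.submatrix (fun j : ↥U => (j : Fin p)) (fun j : ↥U => (j : Fin p)) = Mᵀ * M := by
    ext a b
    rw [← hXX]
    simp only [hMdef, Matrix.mul_apply, Matrix.submatrix_apply, Matrix.transpose_apply, id_eq]
    exact Finset.sum_congr rfl fun k _ => by rw [hXe]
  have hsub1' : Sig.submatrix id (fun j : ↥(insert i U) => (j : Fin p)) = X * N := by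
    ext a b
    rw [← hXX]
    simp [hNdef, Matrix.mul_apply, Matrix.submatrix_apply]
  have hsub2' : Sig.submatrix (fun j : ↥(insert i U) => (j : Fin p)) id = Nᵀ * X := by
    ext a b
    rw [← hXX]
    simp only [hNdef, Matrix.mul_apply, Matrix.submatrix_apply, Matrix.transpose_apply, id_eq]
    exact Finset.sum_congr rfl fun k _ => by rw [hXe]
  have hsub3' : Sig.submatrix (fun j : ↥(insert i U) => (j : Fin p))
      (fun j : ↥(insert i U) => (j : Fin p)) = Nᵀ * N := by
    ext a b
    rw [← hXX]
    simp only [hNdef, Matrix.mul_apply, Matrix.submatrix_apply, Matrix.transpose_apply, id_eq]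
    exact Finset.sum_congr rfl fun k _ => by rw [hXe]
  -- Penrose properties
  have hPinvU : Pinv (Mᵀ * M) BU := by
    have h := mpinv_spec _ (exists_pinv_of_posSemidef
      (hSig.submatrix (fun j : ↥U => (j : Fin p))))
    rw [← hBUdef] at h
    rwa [hsub3] at h
  have hPinvV : Pinv (Nᵀ * N) BV := by
    have h := mpinv_spec _ (exists_pinv_of_posSemidef
      (hSig.submatrix (fun j : ↥(insert i U) => (j : Fin p))))
    rw [← hBVdef] at h
    rwa [hsub3'] at h
  have hBUsym : BUᵀ = BU :=
    pinv_unique (pinv_transpose (by simp [Matrix.transpose_mul]) hPinvU) hPinvU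
  have hBVsym : BVᵀ = BV :=
    pinv_unique (pinv_transpose (by simp [Matrix.transpose_mul]) hPinvV) hPinvV
  -- projections
  set P : Matrix (Fin p) (Fin p) ℝ := M * BU * Mᵀ with hPdef
  set Q : Matrix (Fin p) (Fin p) ℝ := N * BV * Nᵀ with hQdef
  have hPM : P * M = M := proj_mul_self M BU hPinvU.1 hBUsym
  have hPP : P * P = P := proj_idem M BU hPinvU.1 hBUsym
  have hPs : Pᵀ = P := proj_symm M BU hBUsym
  have hQN : Q * N = N := proj_mul_self N BV hPinvV.1 hBVsym
  have hQs : Qᵀ = Q := proj_symm N BV hBVsym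
  -- forms of the residuals
  have hRform : SigR = X * X - X * (P * X) := by
    rw [hR, hsub1, hsub2, ← hXX, hPdef]
    simp only [Matrix.mul_assoc]
  have hR'form : SigR' = X * X - X * (Q * X) := by
    rw [hR', hsub1', hsub2', ← hXX, hQdef]
    simp only [Matrix.mul_assoc]
  -- the residual vector r
  have hcol : ∀ A C : Matrix (Fin p) (Fin p) ℝ,
      (A *ᵥ fun k => C k i) = fun j => (A * C) j i := by
    intro A C
    funext j
    simp [Matrix.mulVec, dotProduct, Matrix.mul_apply]
  set r : Fin p → ℝ := (fun k => X k i) - P *ᵥ (fun k => X k i) with hr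
  have hbeta : β = X *ᵥ r := by
    rw [hβ, hRform, hr, Matrix.mulVec_sub, hcol P X, hcol X X, hcol X (P * X)]
    funext j
    simp [Matrix.sub_apply]
  have hPr : P *ᵥ r = 0 := by
    rw [hr, Matrix.mulVec_sub, Matrix.mulVec_mulVec, hPP, sub_self]
  have hPdot : ∀ y : Fin p → ℝ, (P *ᵥ y) ⬝ᵥ r = 0 := by
    intro y
    rw [dot_mulVec_left, hPs, hPr, dotProduct_zero]
  have hxir : (fun k => X k i) ⬝ᵥ r = r ⬝ᵥ r := by
    have hxi : (fun k => X k i) = r + P *ᵥ (fun k => X k i) := by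
      rw [hr]; exact (sub_add_cancel _ _).symm
    conv_lhs => rw [hxi]
    rw [add_dotProduct, hPdot, add_zero]
  have hbi : β i = r ⬝ᵥ r := by
    rw [hbeta, ← hxir]
    simp only [Matrix.mulVec, dotProduct]
    exact Finset.sum_congr rfl fun k _ => by rw [hXe]
  -- column relations between Q and M, x_i
  have hQM : Q * M = M := by
    ext k u
    have hu : ((u : Fin p) ∈ insert i U) := Finset.mem_insert_of_mem u.2
    have h1 : (Q * M) k u = (Q * N) k ⟨(u : Fin p), hu⟩ := by
      simp [Matrix.mul_apply, hMdef, hNdef, Matrix.submatrix_apply]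
    rw [h1, hQN]
    rfl
  have hQxi : (Q *ᵥ fun k => X k i) = fun k => X k i := by
    funext k
    have hmi : (i ∈ insert i U) := Finset.mem_insert_self i U
    have h1 : (Q *ᵥ fun k => X k i) k = (Q * N) k ⟨i, hmi⟩ := by
      simp [Matrix.mulVec, dotProduct, Matrix.mul_apply, hNdef]
    rw [h1, hQN]
    rfl
  have hQP : Q * P = P := by
    rw [hPdef]
    calc Q * (M * BU * Mᵀ) = (Q * M) * BU * Mᵀ := by simp only [Matrix.mul_assoc]
    _ = M * BU * Mᵀ := by rw [hQM]
  have hQr : Q *ᵥ r = r := by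
    rw [hr, Matrix.mulVec_sub, hQxi, Matrix.mulVec_mulVec, hQP]
  -- the rank-one updated projection
  set Rm : Matrix (Fin p) (Fin p) ℝ := P + (β i)⁻¹ • vecMulVec r r with hRmdef
  have hRmS : Rmᵀ = Rm := by
    rw [hRmdef, Matrix.transpose_add, Matrix.transpose_smul, hPs, vecMulVec_transpose']
  have hQRm : Q * Rm = Rm := by
    rw [hRmdef, Matrix.mul_add, hQP, Matrix.mul_smul, FRU.mul_vecMulVec, hQr]
  have hRmN : Rm * N = N := by
    ext k v
    have h1 : (Rm * N) k v = (Rm *ᵥ fun j => N j v) k := by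
      simp [Matrix.mul_apply, Matrix.mulVec, dotProduct]
    rw [h1]
    rcases Finset.mem_insert.mp v.2 with hvi | hvU
    · -- v = i
      have hNv : (fun j => N j v) = fun j => X j i := by
        funext j; simp [hNdef, Matrix.submatrix_apply, hvi]
      rw [hNv, hRmdef, Matrix.add_mulVec, Matrix.smul_mulVec, FRU.vecMulVec_mulVec]
      have hrx : r ⬝ᵥ (fun k => X k i) = β i := by
        rw [dotProduct_comm, hxir, hbi]
      rw [hrx]
      have : (β i)⁻¹ • (β i) • r = r := by
        rw [smul_smul, inv_mul_cancel₀ hc0, one_smul]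
      rw [this]
      have : (P *ᵥ fun k => X k i) + r = fun k => X k i := by
        rw [hr]; abel
      rw [show P *ᵥ (fun k => X k i) + r = fun k => X k i from this]
      simp [hNdef, Matrix.submatrix_apply, hvi]
    · -- v ∈ U
      have hNv : (fun j => N j v) = fun j => M j ⟨(v : Fin p), hvU⟩ := by
        funext j; simp [hNdef, hMdef, Matrix.submatrix_apply]
      have hPNv : (P *ᵥ fun j => N j v) = fun j => N j v := by
        funext j
        rw [hNv]
        have : (P *ᵥ fun j => M j ⟨(v : Fin p), hvU⟩) j = (P * M) j ⟨(v : Fin p), hvU⟩ := by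
          simp [Matrix.mulVec, dotProduct, Matrix.mul_apply]
        rw [this, hPM]
        simp [hMdef, hNdef]
      have hrNv : r ⬝ᵥ (fun j => N j v) = 0 := by
        rw [hr, sub_dotProduct]
        have h2 : (P *ᵥ fun k => X k i) ⬝ᵥ (fun j => N j v) =
            (fun k => X k i) ⬝ᵥ (fun j => N j v) := by
          rw [dot_mulVec_left, hPs, hPNv]
        rw [h2, sub_self]
      rw [hRmdef, Matrix.add_mulVec, Matrix.smul_mulVec, FRU.vecMulVec_mulVec, hrNv]
      simp [hPNv]
  have hRmQ : Rm * Q = Q := by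
    rw [hQdef]
    calc Rm * (N * BV * Nᵀ) = (Rm * N) * BV * Nᵀ := by simp only [Matrix.mul_assoc]
    _ = N * BV * Nᵀ := by rw [hRmN]
  have hQeqRm : Q = Rm := by
    calc Q = Rm * Q := hRmQ.symm
    _ = (Qᵀ * Rmᵀ)ᵀ := by rw [Matrix.transpose_mul, Matrix.transpose_transpose,
        Matrix.transpose_transpose]
    _ = (Q * Rm)ᵀ := by rw [hQs, hRmS]
    _ = Rmᵀ := by rw [hQRm]
    _ = Rm := hRmS
  -- final matrix identity
  have hfinal : SigR' = SigR - (β i)⁻¹ • vecMulVec β β := by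
    rw [hR'form, hQeqRm, hRmdef, hRform]
    rw [Matrix.add_mul, Matrix.mul_add, Matrix.smul_mul, Matrix.mul_smul]
    rw [FRU.vecMulVec_mul, FRU.mul_vecMulVec]
    have hrX : r ᵥ* X = X *ᵥ r := by
      conv_lhs => rw [← hXs]
      rw [Matrix.vecMul_transpose]
    rw [hrX, ← hbeta, sub_add_eq_sub_sub]
  rw [hfinal]
  exact trace_rank_one_update SigR β (β i) hc0
end
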